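/- arXiv:1203.5718 — 6 statements merged into one kernel-verified Lean document; each statement's English description precedes it below -/
import Mathlib

section
/- Let B be a commutative noetherian ring whose Jacobson radical is zero, and let M be a finitely generated B-module. If the function assigning to each maximal ideal m of B the dimension of M/mM as a vector space over the residue field B/m is locally constant on the maximal spectrum of B (with its Zariski topology), then M is a flat B-module. -/
open Submodule

lemma aux_coord_mem {B : Type*} [CommRing B] {M : Type*} [AddCommGroup M] [Module B M]
    [Module.Finite B M]
    (J : Ideal B) (hJ : J.IsMaximal) {n : ℕ} (x : Fin n → M)
    (hrank : Module.finrank (B ⧸ J) (M ⧸ (J • ⊤ : Submodule B M)) = n)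
    (r : B) (hr : r ∉ J)
    (hgen : ∀ m : M, r • m ∈ Submodule.span B (Set.range x))
    (v : Fin n → B) (hv : ∑ i, v i • x i = 0) : ∀ i, v i ∈ J := by
  haveI := hJ
  set k' := B ⧸ J
  set Q' := M ⧸ (J • ⊤ : Submodule B M)
  haveI : Module.Finite k' Q' := Module.Finite.of_restrictScalars_finite B k' Q'
  let y : Fin n → Q' := fun i => Submodule.Quotient.mk (x i)
  let ψ : (Fin n → k') →ₗ[k'] Q' := Fintype.linearCombination k' y
  have hcomm : ∀ w : Fin n → B,
      ψ (fun i => Ideal.Quotient.mk J (w i)) = Submodule.Quotient.mk (∑ i, w i • x i) := by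
    intro w
    simp only [ψ, y, Fintype.linearCombination_apply]
    rw [← Submodule.mkQ_apply, map_sum]
    exact Finset.sum_congr rfl fun j _ => by
      rw [Submodule.mkQ_apply, Module.Quotient.mk_smul_mk]
  have hsurj : Function.Surjective ψ := by
    intro q
    obtain ⟨m, rfl⟩ := Submodule.Quotient.mk_surjective _ q
    obtain ⟨u, i, hiJ, hui⟩ := hJ.exists_inv hr
    obtain ⟨c, hc⟩ := mem_span_range_iff_exists_fun B |>.mp (hgen m)
    refine ⟨fun j => Ideal.Quotient.mk J (u * c j), ?_⟩
    rw [hcomm]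
    have h1 : ∑ j, (u * c j) • x j = u • (r • m) := by
      rw [← hc, Finset.smul_sum]
      exact Finset.sum_congr rfl fun j _ => by rw [mul_smul]
    rw [h1]
    rw [Submodule.Quotient.eq]
    have : u • r • m - m = (-i) • m := by
      have : (u * r) • m + i • m = m := by rw [← add_smul, hui, one_smul]
      rw [← mul_smul, neg_smul]
      linear_combination (norm := module) this
    rw [this]
    exact Submodule.smul_mem_smul (J.neg_mem hiJ) trivial
  -- injectivity via rank counting
  letI : Field k' := Ideal.Quotient.field J
  have hker : LinearMap.ker ψ = ⊥ := by
    haveI : FiniteDimensional k' (Fin n → k') := inferInstance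
    have hrange : LinearMap.range ψ = ⊤ := LinearMap.range_eq_top.mpr hsurj
    have h1 := LinearMap.finrank_range_add_finrank_ker ψ
    rw [hrange, finrank_top, hrank, Module.finrank_pi, Fintype.card_fin] at h1
    have : Module.finrank k' (LinearMap.ker ψ) = 0 := by omega
    exact Submodule.finrank_eq_zero.mp this
  intro i
  have : ψ (fun j => Ideal.Quotient.mk J (v j)) = 0 := by
    rw [hcomm, hv, Submodule.Quotient.mk_zero]
  have hmem : (fun j => Ideal.Quotient.mk J (v j)) ∈ LinearMap.ker ψ := this
  rw [hker, Submodule.mem_bot] at hmem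
  have := congrFun hmem i
  exact Ideal.Quotient.eq_zero_iff_mem.mp this


/-- Let `B` be a commutative noetherian ring whose Jacobson radical (the Jacobson radical of
the zero ideal) is zero, and let `M` be a finitely generated `B`-module.  If the function
sending a maximal ideal `m` of `B` (i.e. a point of the maximal spectrum of `B`, with its
Zariski topology) to `dim_{B/m} (M/mM)` is locally constant, then `M` is flat over `B`. -/
theorem flat_of_locallyConstant_fiber_dim
    (B : Type*) [CommRing B] [IsNoetherianRing B]
    (hJac : (⊥ : Ideal B).jacobson = ⊥)
    (M : Type*) [AddCommGroup M] [Module B M] [Module.Finite B M]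
    (hloc : IsLocallyConstant fun m : MaximalSpectrum B =>
      Module.finrank (B ⧸ m.asIdeal) (M ⧸ (m.asIdeal • ⊤ : Submodule B M))) :
    Module.Flat B M := by
  haveI hFP : Module.FinitePresentation B M := Module.finitePresentation_of_finite B M
  suffices h : ∀ (I : Ideal B) (_ : I.IsMaximal),
      Module.Free (Localization.AtPrime I) (LocalizedModule I.primeCompl M) by
    haveI : Module.Projective B M :=
      Module.projective_of_localization_maximal fun I hI => by
        haveI := h I hI; exact Module.Projective.of_free
    exact Module.Flat.of_projective
  intro I hI
  set S := I.primeCompl with hS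
  letI : Field (B ⧸ I) := Ideal.Quotient.field I
  haveI : Module.Finite (B ⧸ I) (M ⧸ (I • ⊤ : Submodule B M)) :=
    Module.Finite.of_restrictScalars_finite B _ _
  set n := Module.finrank (B ⧸ I) (M ⧸ (I • ⊤ : Submodule B M)) with hn
  let b := Module.finBasis (B ⧸ I) (M ⧸ (I • ⊤ : Submodule B M))
  have hx : ∀ i : Fin n, ∃ m : M, Submodule.Quotient.mk m = b i :=
    fun i => Submodule.Quotient.mk_surjective _ (b i)
  choose x hx using hx
  -- the quotient map turns B-combinations of x into (B⧸I)-combinations of b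
  have hmk : ∀ w : Fin n → B, Submodule.Quotient.mk (p := (I • ⊤ : Submodule B M))
      (∑ i, w i • x i) = ∑ i, Ideal.Quotient.mk I (w i) • b i := by
    intro w
    rw [← Submodule.mkQ_apply, map_sum]
    exact Finset.sum_congr rfl fun j _ => by
      rw [Submodule.mkQ_apply, ← hx j, Module.Quotient.mk_smul_mk]
  set N := Submodule.span B (Set.range x) with hNdef
  have hsup : N ⊔ (I • ⊤ : Submodule B M) = ⊤ := by
    rw [eq_top_iff]
    intro m _
    have hc : ∀ i : Fin n, ∃ a : B,
        Ideal.Quotient.mk I a = b.repr (Submodule.Quotient.mk m) i :=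
      fun i => Ideal.Quotient.mk_surjective _
    choose a ha using hc
    have hmem : m - ∑ i, a i • x i ∈ (I • ⊤ : Submodule B M) := by
      rw [← Submodule.Quotient.mk_eq_zero, Submodule.Quotient.mk_sub, hmk]
      simp only [ha]
      rw [b.sum_repr (Submodule.Quotient.mk m), sub_self]
    have hspan : (∑ i, a i • x i) ∈ N :=
      Submodule.sum_smul_mem _ _ fun i _ => Submodule.subset_span ⟨i, rfl⟩
    have : m = (∑ i, a i • x i) + (m - ∑ i, a i • x i) := by abel
    rw [this]
    exact Submodule.add_mem_sup hspan hmem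
  -- Nakayama
  have hle : (⊤ : Submodule B (M ⧸ N)) ≤ I • ⊤ := by
    have h1 : Submodule.map N.mkQ (N ⊔ (I • ⊤ : Submodule B M)) = ⊤ := by
      rw [hsup, Submodule.map_top, Submodule.range_mkQ]
    rw [Submodule.map_sup, Submodule.map_smul'', Submodule.map_top, Submodule.range_mkQ] at h1
    rw [Submodule.mkQ_map_self, bot_sup_eq] at h1
    rw [h1]
  obtain ⟨r, hr1, hr2⟩ :=
    Submodule.exists_sub_one_mem_and_smul_eq_zero_of_fg_of_le_smul I
      (⊤ : Submodule B (M ⧸ N)) Module.Finite.fg_top hle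
  have hrI : r ∉ I := fun h => hI.ne_top ((Ideal.eq_top_iff_one I).mpr (by simpa using I.sub_mem h hr1))
  have hrgen : ∀ m : M, r • m ∈ N := by
    intro m
    rw [← Submodule.Quotient.mk_eq_zero N, Submodule.Quotient.mk_smul]
    exact hr2 _ trivial
  -- locally constant rank: find g ∉ I controlling a neighborhood
  have hopen : IsOpen {m : MaximalSpectrum B |
      Module.finrank (B ⧸ m.asIdeal) (M ⧸ (m.asIdeal • ⊤ : Submodule B M)) = n} :=
    hloc.isOpen_fiber n
  rw [isOpen_induced_iff] at hopen
  obtain ⟨U, hU, hUeq⟩ := hopen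
  have hptU : (⟨I, hI⟩ : MaximalSpectrum B).toPrimeSpectrum ∈ U := by
    rw [← Set.mem_preimage, hUeq]; exact rfl
  obtain ⟨V, ⟨g, rfl⟩, hgmem, hgsub⟩ :=
    PrimeSpectrum.isTopologicalBasis_basic_opens.exists_subset_of_mem_open hptU hU
  have hgI : g ∉ I := (PrimeSpectrum.mem_basicOpen g _).mp hgmem
  have hrank' : ∀ (J : Ideal B) (hJ : J.IsMaximal), g ∉ J →
      Module.finrank (B ⧸ J) (M ⧸ (J • ⊤ : Submodule B M)) = n := by
    intro J hJ hgJ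
    have h1 : (⟨J, hJ⟩ : MaximalSpectrum B).toPrimeSpectrum ∈ U :=
      hgsub ((PrimeSpectrum.mem_basicOpen g _).mpr hgJ)
    have h2 : (⟨J, hJ⟩ : MaximalSpectrum B) ∈ MaximalSpectrum.toPrimeSpectrum ⁻¹' U := h1
    rw [hUeq] at h2
    exact h2
  -- elements of the kernel are killed by r * g
  have hK : ∀ v : Fin n → B, (∑ i, v i • x i = 0) → ∀ i, (r * g) * v i = 0 := by
    intro v hv i
    have hmem : (r * g) * v i ∈ (⊥ : Ideal B).jacobson := by
      rw [Ideal.jacobson]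
      refine Submodule.mem_sInf.mpr ?_
      rintro J ⟨-, hJ⟩
      by_cases hrJ : r ∈ J
      · exact Ideal.mul_mem_right _ J (Ideal.mul_mem_right g J hrJ)
      by_cases hgJ : g ∈ J
      · exact Ideal.mul_mem_right _ J (Ideal.mul_mem_left J r hgJ)
      · exact Ideal.mul_mem_left J _ (aux_coord_mem J hJ x (hrank' J hJ hgJ) r hrJ hrgen v hv i)
    rwa [hJac, Ideal.mem_bot] at hmem
  -- construct the localized presentation
  let φ : (Fin n → B) →ₗ[B] M := Fintype.linearCombination B x
  have hφ : ∀ v : Fin n → B, φ v = ∑ i, v i • x i := fun v => by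
    simp [φ, Fintype.linearCombination_apply]
  let G : (Fin n → B) →ₗ[B] LocalizedModule S M := (LocalizedModule.mkLinearMap S M).comp φ
  have hrS : r ∈ S := hrI
  have hgS : g ∈ S := hgI
  have hGapp : ∀ v, G v = LocalizedModule.mk (φ v) 1 := fun v => rfl
  haveI : IsLocalizedModule S G := by
    constructor
    · exact fun s => IsLocalizedModule.map_units (LocalizedModule.mkLinearMap S M) s
    · intro y
      induction y using LocalizedModule.induction_on with
      | _ m t =>
        obtain ⟨c, hc⟩ := (mem_span_range_iff_exists_fun B).mp (hrgen m)
        refine ⟨⟨c, ⟨r, hrS⟩ * t⟩, ?_⟩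
        show (⟨r, hrS⟩ * t : S) • LocalizedModule.mk m t = G c
        rw [hGapp, hφ, hc, Submonoid.smul_def, LocalizedModule.smul'_mk, LocalizedModule.mk_eq]
        refine ⟨1, ?_⟩
        simp only [one_smul, Submonoid.smul_def, Submonoid.coe_mul]
        rw [mul_comm, mul_smul]
    · intro v w hvw
      rw [hGapp, hGapp, LocalizedModule.mk_eq] at hvw
      obtain ⟨u, hu⟩ := hvw
      have hu' : (u : B) • φ v = (u : B) • φ w := by
        simpa [Submonoid.smul_def] using hu
      have hker : ∑ i, ((u : B) • v - (u : B) • w) i • x i = 0 := by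
        have h0 : φ ((u : B) • v - (u : B) • w) = 0 := by
          rw [map_sub, map_smul, map_smul, hu', sub_self]
        rw [← hφ]; exact h0
      have h0 := hK _ hker
      refine ⟨⟨r * g, Submonoid.mul_mem _ hrS hgS⟩ * u, ?_⟩
      funext i
      have h1 := h0 i
      simp only [Pi.sub_apply, Pi.smul_apply, smul_eq_mul] at h1
      show ((⟨r * g, _⟩ * u : S) : B) • v i = ((⟨r * g, _⟩ * u : S) : B) • w i
      simp only [Submonoid.coe_mul, smul_eq_mul]
      linear_combination h1
  exact Module.free_of_isLocalizedModule S G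
end

section
/- Let R be a Banach algebra over the p-adic field ℚ_p (a complete normed commutative ℚ_p-algebra), and let N be a Banach R-module (a complete normed abelian group with an R-module structure for which scalar multiplication is bounded) which is generated as an R-module by finitely many elements e₁, …, e_n. Then there exists ε > 0 such that for any elements e′₁, …, e′_n of N with ‖e_i − e′_i‖ ≤ ε for every i, the elements e′₁, …, e′_n also generate N as an R-module. -/
open Finset Filter

theorem aux_gen
    (p : ℕ) [Fact p.Prime]
    (R : Type*) [NormedCommRing R] [NormedAlgebra ℚ_[p] R] [CompleteSpace R]
    (N : Type*) [NormedAddCommGroup N] [NormedSpace ℚ_[p] N] [Module R N]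
    [IsScalarTower ℚ_[p] R N] [CompleteSpace N]
    (C : ℝ) (hC0 : 0 < C) (hC : ∀ (r : R) (x : N), ‖r • x‖ ≤ C * ‖r‖ * ‖x‖)
    (n : ℕ) (e : Fin n → N) (he : Submodule.span R (Set.range e) = ⊤) :
    ∃ ε : ℝ, 0 < ε ∧ ∀ e' : Fin n → N,
      (∀ i, ‖e i - e' i‖ ≤ ε) → Submodule.span R (Set.range e') = ⊤ := by
  classical
  -- the continuous linear map (over ℚ_p) sending coefficients to the combination
  set K : ℝ := ∑ i, C * ‖e i‖ with hK
  have Tbound : ∀ c : Fin n → R, ‖∑ i, c i • e i‖ ≤ K * ‖c‖ := by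
    intro c
    calc ‖∑ i, c i • e i‖ ≤ ∑ i, ‖c i • e i‖ := norm_sum_le _ _
      _ ≤ ∑ i, (C * ‖e i‖) * ‖c‖ := by
          refine Finset.sum_le_sum fun i _ => ?_
          calc ‖c i • e i‖ ≤ C * ‖c i‖ * ‖e i‖ := hC _ _
            _ ≤ C * ‖c‖ * ‖e i‖ := by
                have h := norm_le_pi_norm c i
                gcongr
            _ = (C * ‖e i‖) * ‖c‖ := by ring
      _ = K * ‖c‖ := by rw [← Finset.sum_mul]
  let Tlin : (Fin n → R) →ₗ[ℚ_[p]] N :=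
    { toFun := fun c => ∑ i, c i • e i
      map_add' := by
        intro c d
        simp [add_smul, Finset.sum_add_distrib]
      map_smul' := by
        intro z c
        simp only [RingHom.id_apply, Finset.smul_sum]
        refine Finset.sum_congr rfl fun i _ => ?_
        simp [Pi.smul_apply, smul_assoc] }
  let T : (Fin n → R) →L[ℚ_[p]] N := Tlin.mkContinuous K Tbound
  have hTapp : ∀ c : Fin n → R, T c = ∑ i, c i • e i := fun _ => rfl
  have Tsurj : Function.Surjective T := by
    intro x
    have hx : x ∈ Submodule.span R (Set.range e) := he ▸ Submodule.mem_top
    obtain ⟨c, hc⟩ := (Submodule.mem_span_range_iff_exists_fun R).mp hx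
    exact ⟨c, by rw [hTapp]; exact hc⟩
  obtain ⟨M, Mpos, hM⟩ := T.exists_preimage_norm_le Tsurj
  set a : ℝ := C * M * n with ha
  have ha0 : 0 ≤ a := by positivity
  set ε : ℝ := 1 / (2 * (a + 1)) with hε
  have hεpos : 0 < ε := by positivity
  set q : ℝ := a * ε with hq
  have hq0 : 0 ≤ q := by positivity
  have hq1 : q < 1 := by
    rw [hq, hε]
    rw [div_eq_inv_mul, ← mul_assoc]
    have : a * (2 * (a + 1))⁻¹ < 1 := by
      rw [mul_inv_lt_iff₀ (by positivity)]
      nlinarith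
    simpa [mul_comm] using this
  refine ⟨ε, hεpos, fun e' he' => ?_⟩
  have key : ∀ x : N, ∃ c : Fin n → R,
      (∀ i, ‖c i‖ ≤ M * ‖x‖) ∧ ‖x - ∑ i, c i • e' i‖ ≤ q * ‖x‖ := by
    intro x
    obtain ⟨c, hTc, hcn⟩ := hM x
    have hci : ∀ i, ‖c i‖ ≤ M * ‖x‖ := fun i => (norm_le_pi_norm c i).trans hcn
    refine ⟨c, hci, ?_⟩
    have hrw : x - ∑ i, c i • e' i = ∑ i, c i • (e i - e' i) := by
      rw [← hTc, hTapp]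
      simp [smul_sub, Finset.sum_sub_distrib]
    rw [hrw]
    calc ‖∑ i, c i • (e i - e' i)‖ ≤ ∑ i, ‖c i • (e i - e' i)‖ := norm_sum_le _ _
      _ ≤ ∑ _i : Fin n, C * (M * ‖x‖) * ε := by
          refine Finset.sum_le_sum fun i _ => ?_
          calc ‖c i • (e i - e' i)‖ ≤ C * ‖c i‖ * ‖e i - e' i‖ := hC _ _
            _ ≤ C * (M * ‖x‖) * ε := by
                have h1 := hci i
                have h2 := he' i
                gcongr
      _ = q * ‖x‖ := by
          rw [Finset.sum_const, Finset.card_univ, Fintype.card_fin, nsmul_eq_mul]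
          rw [hq, ha]; ring
  -- iterate
  choose c hc1 hc2 using key
  rw [Submodule.eq_top_iff']
  intro x
  set step : N → N := fun y => y - ∑ i, c y i • e' i with hstep
  set X : ℕ → N := fun k => step^[k] x with hX
  have hX0 : X 0 = x := rfl
  have hXsucc : ∀ k, X (k + 1) = step (X k) := by
    intro k
    rw [hX]
    exact Function.iterate_succ_apply' step k x
  have hXnorm : ∀ k, ‖X k‖ ≤ q ^ k * ‖x‖ := by
    intro k
    induction k with
    | zero => simp [hX0]
    | succ k ih =>
      rw [hXsucc k]
      calc ‖step (X k)‖ ≤ q * ‖X k‖ := hc2 (X k)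
        _ ≤ q * (q ^ k * ‖x‖) := by nlinarith
        _ = q ^ (k + 1) * ‖x‖ := by ring
  have hsummable : ∀ i, Summable fun k => c (X k) i := by
    intro i
    refine Summable.of_norm_bounded (g := fun k => (M * ‖x‖) * q ^ k)
      ((summable_geometric_of_lt_one hq0 hq1).mul_left _) fun k => ?_
    calc ‖c (X k) i‖ ≤ M * ‖X k‖ := hc1 (X k) i
      _ ≤ M * (q ^ k * ‖x‖) := by
          have := hXnorm k
          nlinarith
      _ = (M * ‖x‖) * q ^ k := by ring
  set s : Fin n → R := fun i => ∑' k, c (X k) i with hs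
  have hpartial : ∀ Kk : ℕ, ∑ i, (∑ k ∈ Finset.range Kk, c (X k) i) • e' i = x - X Kk := by
    intro Kk
    induction Kk with
    | zero => simp [hX0]
    | succ Kk ih =>
      rw [hXsucc Kk, hstep]
      simp only [Finset.sum_range_succ, add_smul, Finset.sum_add_distrib, ih]
      abel
  have hsmulcont : ∀ v : N, Continuous fun r : R => r • v := by
    intro v
    refine LipschitzWith.continuous (K := Real.toNNReal (C * ‖v‖))
      (LipschitzWith.of_dist_le_mul fun r r' => ?_)
    rw [dist_eq_norm, dist_eq_norm, ← sub_smul]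
    calc ‖(r - r') • v‖ ≤ C * ‖r - r'‖ * ‖v‖ := hC _ _
      _ = (C * ‖v‖) * ‖r - r'‖ := by ring
      _ ≤ (Real.toNNReal (C * ‖v‖) : ℝ) * ‖r - r'‖ := by
          have h1 : (0:ℝ) ≤ ‖r - r'‖ := norm_nonneg _
          have h2 : C * ‖v‖ ≤ (Real.toNNReal (C * ‖v‖) : ℝ) := Real.le_coe_toNNReal _
          nlinarith
  have hlim1 : Tendsto (fun Kk => ∑ i, (∑ k ∈ Finset.range Kk, c (X k) i) • e' i)
      atTop (nhds (∑ i, s i • e' i)) := by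
    refine tendsto_finset_sum _ fun i _ => ?_
    exact ((hsmulcont (e' i)).continuousAt.tendsto).comp
      ((hsummable i).hasSum.tendsto_sum_nat)
  have hlim2 : Tendsto (fun Kk => x - X Kk) atTop (nhds x) := by
    have hXto0 : Tendsto X atTop (nhds 0) := by
      rw [tendsto_zero_iff_norm_tendsto_zero]
      refine squeeze_zero (fun k => norm_nonneg _) hXnorm ?_
      simpa using (tendsto_pow_atTop_nhds_zero_of_lt_one hq0 hq1).mul_const ‖x‖
    simpa using tendsto_const_nhds.sub hXto0
  have hxeq : x = ∑ i, s i • e' i := by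
    simp only [hpartial] at hlim1
    exact (tendsto_nhds_unique hlim1 hlim2).symm
  rw [hxeq]
  exact (Submodule.mem_span_range_iff_exists_fun R).mpr ⟨s, rfl⟩

/-- Type synonym used to renorm a Banach module. -/
def PerturbWr (N : Type*) : Type _ := N

/-- Let `R` be a Banach algebra over `ℚ_p` (a complete normed commutative `ℚ_p`-algebra) and
let `N` be a Banach `R`-module (a complete normed abelian group with an `R`-module structure
whose scalar multiplication is bounded: `‖r • x‖ ≤ C * ‖r‖ * ‖x‖` for some constant `C`),
generated as an `R`-module by finitely many elements `e 0, …, e (n-1)`.  Then there is an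
`ε > 0` such that any elements `e' 0, …, e' (n-1)` of `N` with `‖e i - e' i‖ ≤ ε` for all `i`
also generate `N` as an `R`-module. -/
theorem generators_stable_under_perturbation
    (p : ℕ) [Fact p.Prime]
    (R : Type*) [NormedCommRing R] [NormedAlgebra ℚ_[p] R] [CompleteSpace R]
    (N : Type*) [NormedAddCommGroup N] [Module R N] [CompleteSpace N]
    (C : ℝ) (hC : ∀ (r : R) (x : N), ‖r • x‖ ≤ C * ‖r‖ * ‖x‖)
    (n : ℕ) (e : Fin n → N) (he : Submodule.span R (Set.range e) = ⊤) :
    ∃ ε : ℝ, 0 < ε ∧ ∀ e' : Fin n → N,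
      (∀ i, ‖e i - e' i‖ ≤ ε) → Submodule.span R (Set.range e') = ⊤ := by
  classical
  rcases subsingleton_or_nontrivial N with hN | hN
  · refine ⟨1, one_pos, fun e' _ => ?_⟩
    rw [Submodule.eq_top_iff']
    intro x
    rw [Subsingleton.elim x 0]
    exact zero_mem _
  -- C is positive
  obtain ⟨x₀, hx₀⟩ := exists_ne (0 : N)
  have hx₀n : 0 < ‖x₀‖ := norm_pos_iff.mpr hx₀
  have h1R : (0:ℝ) ≤ ‖(1:R)‖ := norm_nonneg _
  have hC1 : 1 ≤ C * ‖(1:R)‖ := by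
    have h := hC 1 x₀
    rw [one_smul] at h
    nlinarith
  have hC0 : 0 < C := by nlinarith
  set D : ℝ := C * ‖(1:R)‖ with hD
  have hD0 : 0 < D := lt_of_lt_of_le one_pos hC1
  -- the new norm `g` on `N`, as a function
  set S : N → Set ℝ := fun x =>
    {t | ∃ z : ℚ_[p], z ≠ 0 ∧ t = ‖(algebraMap ℚ_[p] R z) • x‖ / ‖z‖} with hS
  have hmem1 : ∀ x : N, ‖x‖ ∈ S x := by
    intro x
    exact ⟨1, one_ne_zero, by simp⟩
  have hub : ∀ (x : N) (t : ℝ), t ∈ S x → t ≤ D * ‖x‖ := by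
    rintro x t ⟨z, hz, rfl⟩
    have hzn : 0 < ‖z‖ := norm_pos_iff.mpr hz
    rw [div_le_iff₀ hzn]
    calc ‖(algebraMap ℚ_[p] R z) • x‖ ≤ C * ‖algebraMap ℚ_[p] R z‖ * ‖x‖ := hC _ _
      _ = C * (‖z‖ * ‖(1:R)‖) * ‖x‖ := by rw [norm_algebraMap]
      _ = D * ‖x‖ * ‖z‖ := by rw [hD]; ring
  have hbdd : ∀ x : N, BddAbove (S x) := fun x => ⟨D * ‖x‖, hub x⟩
  have hne : ∀ x : N, (S x).Nonempty := fun x => ⟨‖x‖, hmem1 x⟩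
  set g : N → ℝ := fun x => sSup (S x) with hg
  have hmemle : ∀ (x : N) (t : ℝ), t ∈ S x → t ≤ g x := fun x t ht => le_csSup (hbdd x) ht
  have hgle : ∀ x : N, g x ≤ D * ‖x‖ := fun x => csSup_le (hne x) (hub x)
  have hleg : ∀ x : N, ‖x‖ ≤ g x := fun x => hmemle x ‖x‖ (hmem1 x)
  have hg0 : ∀ x : N, 0 ≤ g x := fun x => (norm_nonneg x).trans (hleg x)
  -- properties of `g`, proved entirely in `N`
  have hgzero : g (0 : N) = 0 := by
    refine le_antisymm (csSup_le (hne 0) ?_) (hg0 0)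
    rintro t ⟨z, hz, rfl⟩
    simp
  have hgadd : ∀ a b : N, g (a + b) ≤ g a + g b := by
    intro a b
    refine csSup_le (hne _) ?_
    rintro t ⟨z, hz, rfl⟩
    have hzn : 0 < ‖z‖ := norm_pos_iff.mpr hz
    have h1 : ‖(algebraMap ℚ_[p] R z) • (a + b)‖ / ‖z‖ ≤
        ‖(algebraMap ℚ_[p] R z) • a‖ / ‖z‖ + ‖(algebraMap ℚ_[p] R z) • b‖ / ‖z‖ := by
      rw [← add_div, div_le_div_iff_of_pos_right hzn, smul_add]
      exact norm_add_le _ _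
    refine h1.trans (add_le_add ?_ ?_)
    · exact hmemle a _ ⟨z, hz, rfl⟩
    · exact hmemle b _ ⟨z, hz, rfl⟩
  have hgneg : ∀ a : N, g (-a) = g a := by
    intro a
    have hSeq : S (-a) = S a := by
      ext t
      constructor
      · rintro ⟨z, hz, rfl⟩
        exact ⟨z, hz, by rw [smul_neg, norm_neg]⟩
      · rintro ⟨z, hz, rfl⟩
        exact ⟨z, hz, by rw [smul_neg, norm_neg]⟩
    show sSup (S (-a)) = sSup (S a)
    rw [hSeq]
  have hgeq0 : ∀ a : N, g a = 0 → a = 0 := by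
    intro a ha
    have := hleg a
    rw [ha] at this
    exact norm_le_zero_iff.mp this
  have hgsmulz : ∀ (z : ℚ_[p]) (a : N), g ((algebraMap ℚ_[p] R z) • a) ≤ ‖z‖ * g a := by
    intro z a
    rcases eq_or_ne z 0 with rfl | hz
    · simp [hgzero]
    · have hzn : 0 < ‖z‖ := norm_pos_iff.mpr hz
      refine csSup_le (hne _) ?_
      rintro t ⟨w, hw, rfl⟩
      have hwn : 0 < ‖w‖ := norm_pos_iff.mpr hw
      have hwz : w * z ≠ 0 := mul_ne_zero hw hz
      have key : ‖(algebraMap ℚ_[p] R w) • ((algebraMap ℚ_[p] R z) • a)‖ / ‖w‖ =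
          ‖z‖ * (‖(algebraMap ℚ_[p] R (w * z)) • a‖ / ‖w * z‖) := by
        rw [← mul_smul, ← map_mul, norm_mul]
        field_simp
      rw [key]
      have h2 : ‖(algebraMap ℚ_[p] R (w * z)) • a‖ / ‖w * z‖ ≤ g a :=
        hmemle a _ ⟨w * z, hwz, rfl⟩
      nlinarith [hg0 a]
  have hgsmulR : ∀ (r : R) (a : N), g (r • a) ≤ C * ‖r‖ * g a := by
    intro r a
    refine csSup_le (hne _) ?_
    rintro t ⟨z, hz, rfl⟩
    have hzn : 0 < ‖z‖ := norm_pos_iff.mpr hz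
    have hcomm : (algebraMap ℚ_[p] R z) • (r • a) = r • ((algebraMap ℚ_[p] R z) • a) := by
      rw [← mul_smul, mul_comm, mul_smul]
    rw [hcomm]
    calc ‖r • ((algebraMap ℚ_[p] R z) • a)‖ / ‖z‖ ≤
        (C * ‖r‖ * ‖(algebraMap ℚ_[p] R z) • a‖) / ‖z‖ := by
          gcongr
          exact hC _ _
      _ = C * ‖r‖ * (‖(algebraMap ℚ_[p] R z) • a‖ / ‖z‖) := by ring
      _ ≤ C * ‖r‖ * g a := by
          have h2 : ‖(algebraMap ℚ_[p] R z) • a‖ / ‖z‖ ≤ g a := hmemle a _ ⟨z, hz, rfl⟩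
          have hr : (0:ℝ) ≤ C * ‖r‖ := by positivity
          nlinarith
  -- instances on the wrapper
  let wr : N → PerturbWr N := fun x => x
  let un : PerturbWr N → N := fun x => x
  letI : AddCommGroup (PerturbWr N) := inferInstanceAs (AddCommGroup N)
  letI : Module R (PerturbWr N) := inferInstanceAs (Module R N)
  letI : Module ℚ_[p] (PerturbWr N) := Module.compHom N (algebraMap ℚ_[p] R)
  have hzsmul : ∀ (z : ℚ_[p]) (x : PerturbWr N),
      un (z • x) = (algebraMap ℚ_[p] R z) • un x := fun _ _ => rfl
  have hrsmul : ∀ (r : R) (x : PerturbWr N), un (r • x) = r • un x := fun _ _ => rfl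
  have hsub : ∀ x y : PerturbWr N, un (x - y) = un x - un y := fun _ _ => rfl
  letI : IsScalarTower ℚ_[p] R (PerturbWr N) := by
    refine ⟨fun z r x => ?_⟩
    show (z • r) • x = z • (r • x)
    have h1 : un ((z • r) • x) = un (z • (r • x)) := by
      rw [hrsmul, hzsmul, hrsmul, Algebra.smul_def, mul_smul]
    exact h1
  set gnorm : AddGroupNorm (PerturbWr N) :=
    { toFun := fun x => g (un x)
      map_zero' := hgzero
      add_le' := fun x y => hgadd (un x) (un y)
      neg' := fun x => hgneg (un x)
      eq_zero_of_map_eq_zero' := fun x hx => hgeq0 (un x) hx } with hgnorm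
  letI nacg : NormedAddCommGroup (PerturbWr N) := gnorm.toNormedAddCommGroup
  have hnormWr : ∀ x : PerturbWr N, ‖x‖ = g (un x) := fun _ => rfl
  letI : NormedSpace ℚ_[p] (PerturbWr N) := by
    refine ⟨fun z x => ?_⟩
    rw [hnormWr, hnormWr, hzsmul]
    exact hgsmulz z (un x)
  letI : CompleteSpace (PerturbWr N) := by
    have hlip : LipschitzWith 1 un := by
      refine LipschitzWith.of_dist_le_mul fun x y => ?_
      rw [dist_eq_norm, dist_eq_norm, hnormWr, ← hsub]
      simpa using hleg (un (x - y))
    have hanti : AntilipschitzWith (Real.toNNReal D) un := by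
      refine AntilipschitzWith.of_le_mul_dist fun x y => ?_
      rw [dist_eq_norm, dist_eq_norm, hnormWr, ← hsub]
      calc g (un (x - y)) ≤ D * ‖un (x - y)‖ := hgle _
        _ ≤ (Real.toNNReal D : ℝ) * ‖un (x - y)‖ := by
            have h2 := Real.le_coe_toNNReal D
            nlinarith [norm_nonneg (un (x - y))]
    have hui : IsUniformInducing un := hanti.isUniformInducing hlip.uniformContinuous
    exact (hui.completeSpace_congr (fun y => ⟨wr y, rfl⟩)).mpr ‹CompleteSpace N›
  -- transfer of the generating condition
  have hspan_iff : ∀ v : Fin n → N,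
      Submodule.span R (Set.range (fun i => wr (v i))) = ⊤ ↔
        Submodule.span R (Set.range v) = ⊤ := by
    intro v
    constructor
    · intro h
      refine Submodule.eq_top_iff'.mpr fun x => ?_
      have hx : wr x ∈ Submodule.span R (Set.range fun i => wr (v i)) :=
        h ▸ Submodule.mem_top
      obtain ⟨c, hc⟩ := (Submodule.mem_span_range_iff_exists_fun R).mp hx
      exact (Submodule.mem_span_range_iff_exists_fun R).mpr ⟨c, hc⟩
    · intro h
      refine Submodule.eq_top_iff'.mpr fun x => ?_
      have hx : un x ∈ Submodule.span R (Set.range v) := h ▸ Submodule.mem_top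
      obtain ⟨c, hc⟩ := (Submodule.mem_span_range_iff_exists_fun R).mp hx
      exact (Submodule.mem_span_range_iff_exists_fun R).mpr ⟨c, hc⟩
  -- bounded scalar multiplication for the new norm
  have hC' : ∀ (r : R) (x : PerturbWr N), ‖r • x‖ ≤ C * ‖r‖ * ‖x‖ := by
    intro r x
    rw [hnormWr, hnormWr, hrsmul]
    exact hgsmulR r (un x)
  -- apply the auxiliary lemma
  obtain ⟨ε, hεpos, H⟩ := aux_gen p R (PerturbWr N) C hC0 hC' n (fun i => wr (e i))
    ((hspan_iff e).mpr he)
  refine ⟨ε / D, by positivity, fun e' he' => ?_⟩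
  refine (hspan_iff e').mp (H (fun i => wr (e' i)) fun i => ?_)
  rw [hnormWr]
  calc g (un (wr (e i) - wr (e' i))) = g (e i - e' i) := rfl
    _ ≤ D * ‖e i - e' i‖ := hgle _
    _ ≤ D * (ε / D) := by
        have h2 := he' i
        nlinarith
    _ = ε := by field_simp
end

section
/- Let R be a commutative ring, let b be an integer, and let Q be a bounded-above cochain complex of finite projective R-modules with Hⁱ(Q) = 0 for all i > b. Then ker(d^b : Q^b → Q^{b+1}) is a finite projective R-module, and the truncated complex P = [⋯ → Q^{b−2} → Q^{b−1} → ker(d^b)] (concentrated in degrees ≤ b, agreeing with Q in degrees < b and with ker(d^b) in degree b) admits a quasi-isomorphism P → Q given by the identity in degrees < b and the inclusion ker(d^b) ⊆ Q^b in degree b. In particular, Q is quasi-isomorphic to a complex of finite projective R-modules vanishing in degrees > b, and if moreover Qⁱ = 0 for all i < a then this complex vanishes outside the degree range [a, b]. -/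
open CategoryTheory Limits

section Aux

variable {R : Type*} [CommRing R]

theorem auxSubsingletonOfIsZero {M : ModuleCat R} (h : IsZero M) : Subsingleton M := by
  have h0 : (𝟙 M : M ⟶ M) = 0 := h.eq_of_src _ _
  constructor
  intro x y
  have hx : x = (0 : M ⟶ M) x := ConcreteCategory.congr_hom h0 x
  have hy : y = (0 : M ⟶ M) y := ConcreteCategory.congr_hom h0 y
  rw [hx, hy]
  rfl

theorem aux_split {M N : Type*} [AddCommGroup M] [Module R M] [AddCommGroup N] [Module R N]
    [Module.Finite R M] [Module.Projective R M] (g : M →ₗ[R] N)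
    (hN : Module.Projective R N) (hg : Function.Surjective g) :
    Module.Finite R (LinearMap.ker g) ∧ Module.Projective R (LinearMap.ker g) := by
  obtain ⟨s, hs⟩ := Module.projective_lifting_property g LinearMap.id hg
  have hmem : ∀ x : M, x - s (g x) ∈ LinearMap.ker g := by
    intro x
    have : g (s (g x)) = g x := LinearMap.congr_fun hs (g x)
    simp [LinearMap.mem_ker, map_sub, this]
  let r : M →ₗ[R] LinearMap.ker g :=
    LinearMap.codRestrict (LinearMap.ker g) (LinearMap.id - s ∘ₗ g) hmem
  have hr : ∀ x : LinearMap.ker g, r x.1 = x := by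
    rintro ⟨x, hx⟩
    apply Subtype.ext
    have hgx : g x = 0 := hx
    show x - s (g x) = x
    rw [hgx, map_zero, sub_zero]
  constructor
  · exact Module.Finite.of_surjective r (fun x => ⟨x.1, hr x⟩)
  · exact Module.Projective.of_split (LinearMap.ker g).subtype r (LinearMap.ext hr)

variable (b : ℤ) (Q : CochainComplex (ModuleCat R) ℤ)

/-- The submodule of `Q.X i` defining the canonical truncation. -/
noncomputable def truncS (i : ℤ) : Submodule R (Q.X i) :=
  LinearMap.ker (if _ : b ≤ i then ((Q.d i (i + 1)).hom : Q.X i →ₗ[R] Q.X (i + 1)) else 0) ⊓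
    LinearMap.ker (if b < i then (LinearMap.id : Q.X i →ₗ[R] Q.X i) else 0)

theorem truncS_eq_of_lt {i : ℤ} (h : i < b) : truncS b Q i = ⊤ := by
  rw [truncS, dif_neg (by omega), if_neg (by omega), LinearMap.ker_zero, LinearMap.ker_zero,
    inf_top_eq]

theorem truncS_eq_ker : truncS b Q b = LinearMap.ker (Q.d b (b + 1)).hom := by
  rw [truncS, dif_pos le_rfl, if_neg (lt_irrefl b), LinearMap.ker_zero, inf_top_eq]

theorem truncS_eq_bot {i : ℤ} (h : b < i) : truncS b Q i = ⊥ := by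
  rw [truncS, if_pos h, LinearMap.ker_id, inf_bot_eq]

theorem truncS_dd {i : ℤ} (x : Q.X i) : Q.d (i + 1) (i + 1 + 1) (Q.d i (i + 1) x) = 0 :=
  ConcreteCategory.congr_hom (Q.d_comp_d i (i + 1) (i + 1 + 1)) x

theorem truncS_mem_d {i : ℤ} (x : Q.X i) (hx : x ∈ truncS b Q i) :
    Q.d i (i + 1) x ∈ truncS b Q (i + 1) := by
  rw [truncS, Submodule.mem_inf] at hx ⊢
  obtain ⟨h1, h2⟩ := hx
  constructor
  · by_cases h : b ≤ i + 1
    · rw [dif_pos h, LinearMap.mem_ker]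
      exact truncS_dd Q x
    · rw [dif_neg h, LinearMap.ker_zero]
      trivial
  · by_cases h : b < i + 1
    · rw [if_pos h, LinearMap.mem_ker, LinearMap.id_apply]
      rcases lt_or_ge i b with hib | hib
      · omega
      · rcases eq_or_lt_of_le hib with heq | hlt
        · rw [dif_pos hib, LinearMap.mem_ker] at h1
          exact h1
        · rw [if_pos hlt, LinearMap.mem_ker, LinearMap.id_apply] at h2
          rw [h2, map_zero]
    · rw [if_neg h, LinearMap.ker_zero]
      trivial

/-- The canonical truncation of `Q` in degrees `≤ b`. -/
noncomputable def truncP : CochainComplex (ModuleCat R) ℤ :=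
  CochainComplex.of (fun i => ModuleCat.of R (truncS b Q i))
    (fun i => ModuleCat.ofHom ((Q.d i (i + 1)).hom.restrict (fun x hx => truncS_mem_d b Q x hx)))
    (fun i => by
      apply ModuleCat.hom_ext
      apply LinearMap.ext
      intro x
      apply Subtype.ext
      exact truncS_dd Q x.1)

theorem truncP_d (i : ℤ) : (truncP b Q).d i (i + 1) =
    ModuleCat.ofHom ((Q.d i (i + 1)).hom.restrict (fun x hx => truncS_mem_d b Q x hx)) :=
  CochainComplex.of_d (X := fun i => ModuleCat.of R (truncS b Q i))
    (fun i => ModuleCat.ofHom ((Q.d i (i + 1)).hom.restrict (fun x hx => truncS_mem_d b Q x hx))) i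

theorem truncP_isZero {i : ℤ} (h : b < i) : IsZero ((truncP b Q).X i) := by
  haveI : Subsingleton ↥(truncS b Q i) := by
    rw [truncS_eq_bot b Q h]
    exact ⟨fun x y => Subtype.ext (by
      have hx := (Submodule.mem_bot R).1 x.2
      have hy := (Submodule.mem_bot R).1 y.2
      rw [hx, hy])⟩
  exact @ModuleCat.isZero_of_subsingleton R _ (ModuleCat.of R (truncS b Q i)) ‹_›

/-- The inclusion of the truncation. -/
noncomputable def truncι : truncP b Q ⟶ Q where
  f i := ModuleCat.ofHom (truncS b Q i).subtype
  comm' i j hij := by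
    obtain rfl : i + 1 = j := hij
    rw [truncP_d]
    apply ModuleCat.hom_ext
    apply LinearMap.ext
    intro x
    rfl

theorem truncι_f (i : ℤ) : (truncι b Q).f i = ModuleCat.ofHom (truncS b Q i).subtype := rfl

/-- The equivalence in degrees `< b`. -/
noncomputable def truncEquivLT {i : ℤ} (h : i < b) : ↥(truncS b Q i) ≃ₗ[R] Q.X i :=
  (LinearEquiv.ofEq _ _ (truncS_eq_of_lt b Q h)).trans Submodule.topEquiv

/-- The equivalence in degree `b`. -/
noncomputable def truncEquivKer : ↥(truncS b Q b) ≃ₗ[R] ↥(LinearMap.ker (Q.d b (b + 1)).hom) :=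
  LinearEquiv.ofEq _ _ (truncS_eq_ker b Q)

end Aux

/-- Let `R` be a commutative ring, `b` an integer, and `Q` a bounded-above cochain complex of
finite projective `R`-modules with `Hⁱ(Q) = 0` for `i > b`.  Then `ker(d^b : Q^b → Q^{b+1})`
is a finite projective `R`-module, and the canonical truncation
`P = [⋯ → Q^{b-2} → Q^{b-1} → ker(d^b)]`, with the inclusion map into `Q` (the identity in
degrees `< b` and the inclusion `ker(d^b) ⊆ Q^b` in degree `b`), is a quasi-isomorphism
`P → Q`.  In particular, `Q` is quasi-isomorphic to a complex of finite projective
`R`-modules vanishing in degrees `> b`, and if moreover `Qⁱ = 0` for `i < a` then this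
complex may be taken to vanish outside `[a, b]`. -/
theorem truncation_below_of_finite_projective_complex
    (R : Type*) [CommRing R] (b : ℤ)
    (Q : CochainComplex (ModuleCat R) ℤ)
    (hQfp : ∀ i, Module.Finite R (Q.X i) ∧ Module.Projective R (Q.X i))
    (hQbdd : ∃ c : ℤ, ∀ i : ℤ, c < i → IsZero (Q.X i))
    (hH : ∀ i : ℤ, b < i → IsZero (Q.homology i)) :
    (Module.Finite R ↥(kernel (Q.d b (b + 1))) ∧
      Module.Projective R ↥(kernel (Q.d b (b + 1)))) ∧
    (∃ (P : CochainComplex (ModuleCat R) ℤ) (ι : P ⟶ Q)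
      (e_b : P.X b ≅ kernel (Q.d b (b + 1)))
      (e : ∀ i : ℤ, i < b → (P.X i ≅ Q.X i)),
      (∀ i : ℤ, b < i → IsZero (P.X i)) ∧
      ι.f b = e_b.hom ≫ kernel.ι (Q.d b (b + 1)) ∧
      (∀ (i : ℤ) (hi : i < b), ι.f i = (e i hi).hom) ∧
      QuasiIso ι ∧
      (∀ i, Module.Finite R (P.X i) ∧ Module.Projective R (P.X i))) ∧
    (∀ a : ℤ, (∀ i : ℤ, i < a → IsZero (Q.X i)) →
      ∃ (P' : CochainComplex (ModuleCat R) ℤ) (f : P' ⟶ Q),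
        QuasiIso f ∧
        (∀ i, Module.Finite R (P'.X i) ∧ Module.Projective R (P'.X i)) ∧
        (∀ i : ℤ, (i < a ∨ b < i) → IsZero (P'.X i))) := by
  obtain ⟨c, hc⟩ := hQbdd
  -- Step 1: `ker (d i)` is finite projective for all `i ≥ b`.
  have key : ∀ i : ℤ, b ≤ i →
      Module.Finite R ↥(LinearMap.ker (Q.d i (i + 1)).hom) ∧
        Module.Projective R ↥(LinearMap.ker (Q.d i (i + 1)).hom) := by
    suffices main : ∀ n : ℕ, ∀ i : ℤ, b ≤ i → c + 1 ≤ i + n →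
        Module.Finite R ↥(LinearMap.ker (Q.d i (i + 1)).hom) ∧
          Module.Projective R ↥(LinearMap.ker (Q.d i (i + 1)).hom) by
      intro i hi
      exact main (c + 1 - i).toNat i hi (by omega)
    intro n
    induction n with
    | zero =>
      intro i _ hci
      haveI : Subsingleton (Q.X i) := auxSubsingletonOfIsZero (hc i (by omega))
      haveI : Subsingleton ↥(LinearMap.ker (Q.d i (i + 1)).hom) :=
        ⟨fun x y => Subtype.ext (Subsingleton.elim _ _)⟩
      constructor
      · exact Module.Finite.of_surjective (0 : R →ₗ[R] _)
          (fun x => ⟨0, Subsingleton.elim _ _⟩)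
      · infer_instance
    | succ n ih =>
      intro i hbi hci
      by_cases hle : c + 1 ≤ i + n
      · exact ih i hbi hle
      · have hnext := ih (i + 1) (by omega) (by omega)
        have hex : (Q.sc' i (i + 1) (i + 1 + 1)).Exact := by
          rw [← Q.exactAt_iff' i (i + 1) (i + 1 + 1) (by simp) (by simp),
            Q.exactAt_iff_isZero_homology]
          exact hH (i + 1) (by omega)
        rw [ShortComplex.moduleCat_exact_iff] at hex
        set θ : Q.X i →ₗ[R] ↥(LinearMap.ker (Q.d (i + 1) (i + 1 + 1)).hom) :=
          LinearMap.codRestrict _ (Q.d i (i + 1)).hom (fun x => truncS_dd Q x) with hθdef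
        have hθ : Function.Surjective θ := by
          rintro ⟨y, hy⟩
          obtain ⟨x, hx⟩ := hex y hy
          exact ⟨x, Subtype.ext hx⟩
        haveI := (hQfp i).1
        haveI := (hQfp i).2
        have hker := aux_split θ hnext.2 hθ
        have hkk : LinearMap.ker θ = LinearMap.ker (Q.d i (i + 1)).hom :=
          LinearMap.ker_codRestrict _ _ _
        rw [hkk] at hker
        exact hker
  have keyb := key b le_rfl
  haveI := keyb.1
  haveI := keyb.2
  have ekk : ↥(LinearMap.ker (Q.d b (b + 1)).hom) ≃ₗ[R] ↥(kernel (Q.d b (b + 1))) :=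
    (ModuleCat.kernelIsoKer (Q.d b (b + 1))).toLinearEquiv.symm
  have part1 : Module.Finite R ↥(kernel (Q.d b (b + 1))) ∧
      Module.Projective R ↥(kernel (Q.d b (b + 1))) :=
    ⟨Module.Finite.equiv ekk, Module.Projective.of_equiv ekk⟩
  -- finite projectivity of the truncation
  have hfp : ∀ i, Module.Finite R ((truncP b Q).X i) ∧ Module.Projective R ((truncP b Q).X i) := by
    intro i
    rcases lt_trichotomy i b with h | h | h
    · haveI := (hQfp i).1
      haveI := (hQfp i).2
      have h1 : Module.Finite R ↥(truncS b Q i) := Module.Finite.equiv (truncEquivLT b Q h).symm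
      have h2 : Module.Projective R ↥(truncS b Q i) :=
        Module.Projective.of_equiv (truncEquivLT b Q h).symm
      exact ⟨h1, h2⟩
    · subst h
      have h1 : Module.Finite R ↥(truncS i Q i) := Module.Finite.equiv (truncEquivKer i Q).symm
      have h2 : Module.Projective R ↥(truncS i Q i) :=
        Module.Projective.of_equiv (truncEquivKer i Q).symm
      exact ⟨h1, h2⟩
    · haveI : Subsingleton ↥(truncS b Q i) := by
        rw [truncS_eq_bot b Q h]
        exact ⟨fun x y => Subtype.ext (by
          have hx := (Submodule.mem_bot R).1 x.2
          have hy := (Submodule.mem_bot R).1 y.2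
          rw [hx, hy])⟩
      have h1 : Module.Finite R ↥(truncS b Q i) :=
        Module.Finite.of_surjective (0 : R →ₗ[R] _) (fun x => ⟨0, Subsingleton.elim _ _⟩)
      have h2 : Module.Projective R ↥(truncS b Q i) := Module.Projective.of_free
      exact ⟨h1, h2⟩
  -- iso and mono properties of the inclusion
  have hmono : ∀ j : ℤ, Mono ((truncι b Q).f j) := fun j =>
    (ModuleCat.mono_iff_injective _).2 Subtype.val_injective
  have hflt : ∀ (i : ℤ) (hi : i < b), (truncι b Q).f i = (truncEquivLT b Q hi).toModuleIso.hom :=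
    fun i hi => ModuleCat.hom_ext (LinearMap.ext fun x => rfl)
  have hiso : ∀ (j : ℤ), j < b → IsIso ((truncι b Q).f j) := by
    intro j hj
    rw [hflt j hj]
    exact (truncEquivLT b Q hj).toModuleIso.isIso_hom
  -- the quasi-isomorphism property
  have hsq : ∀ x : ↥(truncS b Q (b - 1)),
      Q.d (b - 1) b x.1 = (((truncP b Q).d (b - 1) b) x).1 := by
    intro x
    exact ConcreteCategory.congr_hom ((truncι b Q).comm (b - 1) b) x
  have hqis : QuasiIso (truncι b Q) := by
    constructor
    intro n
    rcases lt_trichotomy n b with hn | hn | hn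
    · rw [quasiIsoAt_iff' _ (n - 1) n (n + 1) (by simp) (by simp)]
      have h1 : IsIso ((truncι b Q).f (n - 1)) := hiso _ (by omega)
      have h2 : IsIso ((truncι b Q).f n) := hiso _ hn
      have h3 : Mono ((truncι b Q).f (n + 1)) := hmono _
      have h1' : Epi ((truncι b Q).f (n - 1)) := @IsIso.epi_of_iso _ _ _ _ _ h1
      haveI : Epi ((HomologicalComplex.shortComplexFunctor' (ModuleCat R) (ComplexShape.up ℤ)
        (n - 1) n (n + 1)).map (truncι b Q)).τ₁ := h1'
      haveI : IsIso ((HomologicalComplex.shortComplexFunctor' (ModuleCat R) (ComplexShape.up ℤ)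
        (n - 1) n (n + 1)).map (truncι b Q)).τ₂ := h2
      haveI : Mono ((HomologicalComplex.shortComplexFunctor' (ModuleCat R) (ComplexShape.up ℤ)
        (n - 1) n (n + 1)).map (truncι b Q)).τ₃ := h3
      exact ShortComplex.quasiIso_of_epi_of_isIso_of_mono _
    · -- degree b
      subst hn
      rw [quasiIsoAt_iff' _ (n - 1) n (n + 1) (by simp) (by simp)]
      let φ := (HomologicalComplex.shortComplexFunctor' (ModuleCat R) (ComplexShape.up ℤ)
        (n - 1) n (n + 1)).map (truncι n Q)
      let S₁ := (truncP n Q).sc' (n - 1) n (n + 1)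
      let S₂ := Q.sc' (n - 1) n (n + 1)
      show ShortComplex.QuasiIso φ
      have hg1 : S₁.g = 0 := (truncP_isZero n Q (by omega)).eq_of_tgt _ _
      let h₁ : S₁.LeftHomologyData :=
        ShortComplex.LeftHomologyData.ofIsColimitCokernelCofork S₁ hg1 _
          (ModuleCat.cokernelIsColimit S₁.f)
      let h₂ : S₂.LeftHomologyData := S₂.moduleCatLeftHomologyData
      let k₀ : ↥(truncS n Q n) ≃ₗ[R] ↥(LinearMap.ker S₂.g.hom) :=
        LinearEquiv.ofEq _ _ (truncS_eq_ker n Q)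
      have hsq' : ∀ x : ↥(truncS n Q (n - 1)), S₂.f x.1 = (S₁.f x).1 := fun x => hsq x
      have hle : ∀ x : ↥(truncS n Q (n - 1)),
          k₀ (S₁.f x) ∈ LinearMap.range S₂.moduleCatToCycles := by
        intro x
        refine ⟨x.1, Subtype.ext ?_⟩
        exact hsq' x
      let φH : h₁.H ⟶ h₂.H := ModuleCat.ofHom <|
        Submodule.liftQ (LinearMap.range S₁.f.hom)
          ((LinearMap.range S₂.moduleCatToCycles).mkQ ∘ₗ k₀.toLinearMap)
          (by
            rintro _ ⟨x, rfl⟩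
            simp only [LinearMap.mem_ker, LinearMap.comp_apply, Submodule.mkQ_apply]
            exact (Submodule.Quotient.mk_eq_zero _).2 (hle x))
      let γ : ShortComplex.LeftHomologyMapData φ h₁ h₂ :=
        { φK := ModuleCat.ofHom k₀.toLinearMap
          φH := φH
          commi := by apply ModuleCat.hom_ext; apply LinearMap.ext; intro x; rfl
          commf' := by
            rw [ShortComplex.LeftHomologyData.ofIsColimitCokernelCofork_f']
            apply ModuleCat.hom_ext
            apply LinearMap.ext
            intro x
            exact Subtype.ext (hsq' x).symm
          commπ := by apply ModuleCat.hom_ext; apply LinearMap.ext; intro x; rfl }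
      rw [γ.quasiIso_iff]
      have hbij : Function.Bijective φH := by
        constructor
        · intro u v huv
          obtain ⟨x, rfl⟩ := Submodule.mkQ_surjective _ u
          obtain ⟨y, rfl⟩ := Submodule.mkQ_surjective _ v
          have h1 : (LinearMap.range S₂.moduleCatToCycles).mkQ (k₀ x) =
              (LinearMap.range S₂.moduleCatToCycles).mkQ (k₀ y) := huv
          rw [Submodule.mkQ_apply, Submodule.mkQ_apply, Submodule.Quotient.eq] at h1
          obtain ⟨w, hw⟩ := h1
          rw [Submodule.mkQ_apply, Submodule.mkQ_apply]
          show (Submodule.Quotient.mk x : S₁.X₂ ⧸ LinearMap.range S₁.f.hom) = Submodule.Quotient.mk y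
          rw [Submodule.Quotient.eq]
          have wmem : w ∈ truncS n Q (n - 1) := by
            rw [truncS_eq_of_lt n Q (by omega)]; trivial
          refine ⟨⟨w, wmem⟩, ?_⟩
          apply Subtype.ext
          rw [← hsq' ⟨w, wmem⟩]
          have h3 : S₂.f w = (S₂.moduleCatToCycles w).1 := rfl
          rw [h3, hw]
          rfl
        · intro y
          obtain ⟨z, rfl⟩ := Submodule.mkQ_surjective _ y
          refine ⟨Submodule.Quotient.mk (k₀.symm z), ?_⟩
          show (LinearMap.range S₂.moduleCatToCycles).mkQ (k₀ (k₀.symm z)) = _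
          rw [k₀.apply_symm_apply]
      let eqv := LinearEquiv.ofBijective φH.hom hbij
      exact ⟨ModuleCat.ofHom eqv.symm.toLinearMap,
        ModuleCat.hom_ext (LinearMap.ext fun x => eqv.symm_apply_apply x),
        ModuleCat.hom_ext (LinearMap.ext fun x => eqv.apply_symm_apply x)⟩
    · -- degree > b
      have hPex : (truncP b Q).ExactAt n := by
        rw [HomologicalComplex.exactAt_iff]
        exact ShortComplex.exact_of_isZero_X₂ _ (truncP_isZero b Q hn)
      rw [quasiIsoAt_iff_exactAt _ _ hPex, Q.exactAt_iff_isZero_homology]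
      exact hH n hn
  refine ⟨part1, ?_, ?_⟩
  · refine ⟨truncP b Q, truncι b Q,
      (truncEquivKer b Q).toModuleIso ≪≫ (ModuleCat.kernelIsoKer (Q.d b (b + 1))).symm,
      fun i hi => (truncEquivLT b Q hi).toModuleIso, fun i hi => truncP_isZero b Q hi, ?_,
      hflt, hqis, hfp⟩
    erw [Iso.trans_hom, Iso.symm_hom, Category.assoc, ModuleCat.kernelIsoKer_inv_kernel_ι]
    apply ModuleCat.hom_ext
    apply LinearMap.ext
    intro x
    rfl
  · intro a ha
    refine ⟨truncP b Q, truncι b Q, hqis, hfp, ?_⟩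
    intro i hi
    rcases hi with hi | hi
    · by_cases hib : b < i
      · exact truncP_isZero b Q hib
      · haveI : Subsingleton (Q.X i) := auxSubsingletonOfIsZero (ha i hi)
        haveI : Subsingleton ↥(truncS b Q i) := ⟨fun x y => Subtype.ext (Subsingleton.elim _ _)⟩
        exact @ModuleCat.isZero_of_subsingleton R _ (ModuleCat.of R (truncS b Q i)) ‹_›
    · exact truncP_isZero b Q hi
end

section
/- Let R be a commutative noetherian ring, let Φ be an n × m matrix over R, and let r be a natural number with r ≤ n. Suppose that every (n−r+1) × (n−r+1) minor of Φ vanishes, and that the ideal of R generated by all (n−r) × (n−r) minors of Φ is generated by a single element a which is not a zero-divisor in R. Then the image of the R-linear map Rᵐ → Rⁿ given by Φ is a flat R-module, and for every prime ideal p of R its localization at p is a free R_p-module of rank n − r. -/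
open Matrix

lemma snoc_inj {k n : ℕ} {I : Fin k → Fin n} {i : Fin n}
    (hI : Function.Injective I) (hi : ∀ s, I s ≠ i) :
    Function.Injective (Fin.snoc I i : Fin (k+1) → Fin n) := by
  intro x y hxy
  rcases Fin.eq_castSucc_or_eq_last x with ⟨x', rfl⟩ | rfl <;>
    rcases Fin.eq_castSucc_or_eq_last y with ⟨y', rfl⟩ | rfl <;>
    simp only [Fin.snoc_castSucc, Fin.snoc_last] at hxy
  · exact congrArg Fin.castSucc (hI hxy)
  · exact absurd hxy (hi x')
  · exact absurd hxy.symm (hi y')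
  · rfl

theorem aux_local {S : Type*} [CommRing S] [IsLocalRing S] [Nontrivial S]
    {n m k : ℕ} (Φ : Matrix (Fin n) (Fin m) S)
    (a : S) (ha : a ∈ nonZeroDivisors S)
    (hvanish : ∀ (f : Fin (k + 1) → Fin n) (g : Fin (k + 1) → Fin m),
      Function.Injective f → Function.Injective g → (Φ.submatrix f g).det = 0)
    (hgen : Ideal.span {x : S | ∃ (f : Fin k → Fin n) (g : Fin k → Fin m),
        Function.Injective f ∧ Function.Injective g ∧ (Φ.submatrix f g).det = x} =
      Ideal.span {a}) :
    Module.Free S (LinearMap.range Φ.mulVecLin) ∧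
      Module.finrank S (LinearMap.range Φ.mulVecLin) = k := by
  classical
  set T : Set S := {x : S | ∃ (f : Fin k → Fin n) (g : Fin k → Fin m),
      Function.Injective f ∧ Function.Injective g ∧ (Φ.submatrix f g).det = x} with hT_def
  have hT : ∀ x ∈ T, ∃ y, y * a = x := fun x hx =>
    Ideal.mem_span_singleton'.mp (hgen ▸ Ideal.subset_span hx)
  have haT : a ∈ Ideal.span T := hgen ▸ Ideal.mem_span_singleton_self a
  obtain ⟨c, hc_supp, hc_sum⟩ := Submodule.mem_span_set.mp haT
  have hb : ∀ x : S, ∃ y, x ∈ T → y * a = x := by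
    intro x
    by_cases hx : x ∈ T
    · exact ⟨(hT x hx).choose, fun _ => (hT x hx).choose_spec⟩
    · exact ⟨0, fun h => absurd h hx⟩
  choose b hbspec using hb
  have hsum1 : (∑ x ∈ c.support, c x * b x) * a = a := by
    rw [Finset.sum_mul]
    calc ∑ x ∈ c.support, c x * b x * a
        = ∑ x ∈ c.support, c x * x :=
          Finset.sum_congr rfl fun x hx => by rw [mul_assoc, hbspec x (hc_supp hx)]
      _ = a := by simpa [Finsupp.sum, smul_eq_mul] using hc_sum
  have hone : (∑ x ∈ c.support, c x * b x) = 1 := by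
    have h0 : ((∑ x ∈ c.support, c x * b x) - 1) * a = 0 := by
      rw [sub_mul, one_mul, hsum1, sub_self]
    exact sub_eq_zero.mp (ha.2 _ h0)
  have hunit : ∃ x ∈ c.support, IsUnit (b x) := by
    by_contra hno
    push_neg at hno
    have h1m : (1 : S) ∈ IsLocalRing.maximalIdeal S := by
      rw [← hone]
      exact Ideal.sum_mem _ fun x hx => Ideal.mul_mem_left _ _
        ((IsLocalRing.mem_maximalIdeal _).mpr (hno x hx))
    exact ((IsLocalRing.mem_maximalIdeal _).mp h1m) isUnit_one
  obtain ⟨x₀, hx₀s, hx₀u⟩ := hunit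
  obtain ⟨I, J, hI, hJ, hdet⟩ := hc_supp hx₀s
  set d : S := x₀ with hd_def
  have hda : b x₀ * a = d := hbspec x₀ (hc_supp hx₀s)
  have hd_nzd : d ∈ nonZeroDivisors S := hda ▸ mul_mem hx₀u.mem_nonZeroDivisors ha
  have hd_cancel : ∀ x : S, d * x = 0 → x = 0 := fun x hx =>
    hd_nzd.2 x (by rw [mul_comm] at hx; exact hx)
  have hTd : ∀ x ∈ T, ∃ y, y * d = x := by
    intro x hx
    obtain ⟨y, hy⟩ := hT x hx
    obtain ⟨u, hu⟩ := hx₀u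
    refine ⟨y * ↑u⁻¹, ?_⟩
    have : (↑u⁻¹ : S) * d = a := by
      rw [← hda, ← hu, ← mul_assoc, Units.inv_mul, one_mul]
    rw [mul_assoc, this, hy]
  set C : Matrix (Fin n) (Fin k) S := Φ.submatrix id J with hC
  set A : Matrix (Fin k) (Fin k) S := Φ.submatrix I J with hA
  have hAdet : A.det = d := hdet
  -- injectivity of the column map
  have hinj : Function.Injective C.mulVecLin := by
    rw [← LinearMap.ker_eq_bot, LinearMap.ker_eq_bot']
    intro v hv
    have hv' : C.mulVec v = 0 := hv
    have hAv : A.mulVec v = 0 := by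
      funext s
      have h1 : A.mulVec v s = C.mulVec v (I s) := rfl
      rw [h1, hv']
      rfl
    have hdv : d • v = 0 := by
      have h2 : A.adjugate.mulVec (A.mulVec v) = (A.adjugate * A).mulVec v :=
        Matrix.mulVec_mulVec v A.adjugate A
      rw [hAv, Matrix.mulVec_zero, Matrix.adjugate_mul, hAdet] at h2
      rw [Matrix.smul_mulVec, Matrix.one_mulVec] at h2
      exact h2.symm
    funext t
    have : d * v t = 0 := congrFun hdv t
    exact hd_cancel _ this
  -- each column of Φ lies in the range of C
  have hcol : ∀ l : Fin m, (fun i => Φ i l) ∈ LinearMap.range C.mulVecLin := by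
    intro l
    by_cases hl : ∃ s, J s = l
    · obtain ⟨s, rfl⟩ := hl
      exact ⟨Pi.single s 1, by
        funext i
        simp [Matrix.mulVecLin_apply, Matrix.mulVec_single, hC]⟩
    · push_neg at hl
      set g' : Fin (k+1) → Fin m := Fin.snoc J l with hg'
      have hg'inj : Function.Injective g' := snoc_inj hJ hl
      set Mat : Fin (k+1) → Matrix (Fin (k+1)) (Fin (k+1)) S :=
        fun j' => Matrix.of (Fin.snoc (fun s c => Φ (I s) (g' c)) (Pi.single j' 1)) with hMat
      set cc : Fin (k+1) → S := fun j' => (Mat j').det with hcc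
      have key : ∀ i, ∑ j', Φ i (g' j') * cc j' = 0 := by
        intro i
        set B : Matrix (Fin (k+1)) (Fin (k+1)) S := Φ.submatrix (Fin.snoc I i) g' with hB
        have hBdet : B.det = 0 := by
          by_cases hi : ∃ s, I s = i
          · obtain ⟨s, hs⟩ := hi
            refine Matrix.det_zero_of_row_eq (i := Fin.castSucc s) (j := Fin.last k)
              (Fin.ne_of_lt (Fin.castSucc_lt_last s)) ?_
            funext cidx
            simp [hB, Matrix.submatrix_apply, Fin.snoc_castSucc, Fin.snoc_last, hs]
          · push_neg at hi
            exact hvanish _ _ (snoc_inj hI hi) hg'inj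
        have hadj : ∀ j', B.adjugate j' (Fin.last k) = cc j' := by
          intro j'
          rw [Matrix.adjugate_apply]
          congr 1
          funext r cidx
          rcases Fin.eq_castSucc_or_eq_last r with ⟨r', rfl⟩ | rfl
          · rw [Matrix.updateRow_ne (Fin.ne_of_lt (Fin.castSucc_lt_last r'))]
            simp [hB, hMat, Matrix.submatrix_apply, Fin.snoc_castSucc]
          · rw [Matrix.updateRow_self]
            simp [hMat, Fin.snoc_last]
        have hmul := congrFun (congrFun (Matrix.mul_adjugate B) (Fin.last k)) (Fin.last k)
        rw [hBdet] at hmul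
        simp only [Matrix.mul_apply, Matrix.smul_apply, Matrix.one_apply_eq, zero_smul] at hmul
        calc ∑ j', Φ i (g' j') * cc j'
            = ∑ j', B (Fin.last k) j' * B.adjugate j' (Fin.last k) := by
              refine Finset.sum_congr rfl fun j' _ => ?_
              rw [hadj]
              congr 1
              simp [hB, Matrix.submatrix_apply, Fin.snoc_last]
          _ = 0 := hmul
      have hcl : cc (Fin.last k) = d := by
        rw [hcc]
        simp only
        rw [Matrix.det_succ_row _ (Fin.last k)]
        rw [Finset.sum_eq_single (Fin.last k)]
        · have h1 : (Mat (Fin.last k)) (Fin.last k) (Fin.last k) = 1 := by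
            simp [hMat, Fin.snoc_last, Pi.single_eq_same]
          rw [h1, mul_one]
          have h2 : ((Mat (Fin.last k)).submatrix (Fin.last k).succAbove
              (Fin.last k).succAbove) = A := by
            funext r cidx
            simp [hMat, hA, Matrix.submatrix_apply, Fin.succAbove_last,
              Fin.snoc_castSucc, hg']
          rw [h2, hAdet]
          have h3 : (-1 : S) ^ ((Fin.last k : ℕ) + (Fin.last k : ℕ)) = 1 :=
            Even.neg_one_pow ⟨(Fin.last k : ℕ), by ring⟩
          rw [h3, one_mul]
        · intro j' _ hne
          have : (Mat (Fin.last k)) (Fin.last k) j' = 0 := by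
            simp [hMat, Fin.snoc_last, Pi.single_eq_of_ne hne]
          rw [this, mul_zero, zero_mul]
        · intro h
          exact absurd (Finset.mem_univ _) h
      have hTd' : ∀ x ∈ Ideal.span T, ∃ y, y * d = x := by
        intro x hx
        obtain ⟨y, hy⟩ := Ideal.mem_span_singleton'.mp (hgen ▸ hx)
        obtain ⟨u, hu⟩ := hx₀u
        refine ⟨y * ↑u⁻¹, ?_⟩
        have hinv : (↑u⁻¹ : S) * d = a := by
          rw [← hda, ← hu, ← mul_assoc, Units.inv_mul, one_mul]
        rw [mul_assoc, hinv, hy]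
      have hccmem : ∀ t : Fin k, ∃ y, y * d = cc (Fin.castSucc t) := by
        intro t
        refine hTd' _ ?_
        have hexp : cc (Fin.castSucc t) = (-1 : S) ^ ((Fin.last k : ℕ) + ((Fin.castSucc t) : ℕ)) *
            (Φ.submatrix I (g' ∘ (Fin.castSucc t).succAbove)).det := by
          rw [hcc]
          simp only
          rw [Matrix.det_succ_row _ (Fin.last k)]
          rw [Finset.sum_eq_single (Fin.castSucc t)]
          · have h1 : (Mat (Fin.castSucc t)) (Fin.last k) (Fin.castSucc t) = 1 := by
              simp [hMat, Fin.snoc_last, Pi.single_eq_same]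
            rw [h1, mul_one]
            have h2 : ((Mat (Fin.castSucc t)).submatrix (Fin.last k).succAbove
                (Fin.castSucc t).succAbove) = Φ.submatrix I (g' ∘ (Fin.castSucc t).succAbove) := by
              funext r cidx
              simp [hMat, Matrix.submatrix_apply, Fin.succAbove_last, Fin.snoc_castSucc]
            rw [h2]
          · intro j' _ hne
            have : (Mat (Fin.castSucc t)) (Fin.last k) j' = 0 := by
              simp [hMat, Fin.snoc_last, Pi.single_eq_of_ne hne]
            rw [this, mul_zero, zero_mul]
          · intro h
            exact absurd (Finset.mem_univ _) h
        rw [hexp]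
        refine Ideal.mul_mem_left _ _ (Ideal.subset_span ?_)
        exact ⟨I, g' ∘ (Fin.castSucc t).succAbove, hI,
          hg'inj.comp (Fin.succAbove_right_injective), rfl⟩
      choose y hy using hccmem
      refine ⟨fun t => -(y t), ?_⟩
      funext i
      have hsplit := key i
      rw [Fin.sum_univ_castSucc] at hsplit
      have hlast : Φ i (g' (Fin.last k)) * cc (Fin.last k) = Φ i l * d := by
        rw [hcl]
        congr 2
        simp [hg', Fin.snoc_last]
      have hmain : d * (C.mulVecLin (fun t => -(y t)) i - Φ i l) = 0 := by
        have hCv : C.mulVecLin (fun t => -(y t)) i = ∑ t, Φ i (J t) * (-(y t)) := by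
          simp [Matrix.mulVecLin_apply, Matrix.mulVec, dotProduct, hC]
        rw [hCv, mul_sub, Finset.mul_sum]
        have h3 : ∀ t : Fin k, d * (Φ i (J t) * (-(y t))) = -(Φ i (g' (Fin.castSucc t)) * cc (Fin.castSucc t)) := by
          intro t
          rw [← hy t]
          have : g' (Fin.castSucc t) = J t := by simp [hg', Fin.snoc_castSucc]
          rw [this]
          ring
        rw [Finset.sum_congr rfl (fun t _ => h3 t), Finset.sum_neg_distrib]
        linear_combination -hsplit + hlast
      have := hd_cancel _ hmain
      have h4 := sub_eq_zero.mp this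
      exact h4
  -- ranges are equal
  have hr1 : LinearMap.range C.mulVecLin ≤ LinearMap.range Φ.mulVecLin := by
    set E : Matrix (Fin m) (Fin k) S := Matrix.of (fun l s => if l = J s then 1 else 0) with hE
    have hCE : C = Φ * E := by
      funext i s
      simp only [hC, hE, Matrix.mul_apply, Matrix.submatrix_apply, Matrix.of_apply, id]
      rw [Finset.sum_congr rfl (fun l _ => mul_ite (l = J s) (Φ i l) 1 0)]
      simp
    rw [hCE, Matrix.mulVecLin_mul]
    exact LinearMap.range_comp_le_range _ _
  have hr2 : LinearMap.range Φ.mulVecLin ≤ LinearMap.range C.mulVecLin := by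
    rintro v ⟨x, rfl⟩
    have hexp : Φ.mulVecLin x = ∑ l, x l • (fun i => Φ i l) := by
      funext i
      simp [Matrix.mulVecLin_apply, Matrix.mulVec, dotProduct, Finset.sum_apply, mul_comm]
    rw [hexp]
    exact Submodule.sum_mem _ fun l _ => Submodule.smul_mem _ _ (hcol l)
  have hrange : LinearMap.range Φ.mulVecLin = LinearMap.range C.mulVecLin :=
    le_antisymm hr2 hr1
  have e : (LinearMap.range Φ.mulVecLin) ≃ₗ[S] (Fin k → S) :=
    (LinearEquiv.ofEq _ _ hrange).trans (LinearEquiv.ofInjective C.mulVecLin hinj).symm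
  constructor
  · exact Module.Free.of_equiv e.symm
  · rw [LinearEquiv.finrank_eq e, Module.finrank_pi, Fintype.card_fin]


section PiLoc
variable {R : Type*} [CommRing R] (S : Type*) [CommRing S] [Algebra R S]
  (p : Submonoid R) [IsLocalization p S]

/-- The componentwise localization map on finite products. -/
noncomputable def piLocMap (ι : Type*) : (ι → R) →ₗ[R] (ι → S) :=
  LinearMap.pi fun i => (Algebra.linearMap R S).comp (LinearMap.proj i)

@[simp] lemma piLocMap_apply (ι : Type*) (x : ι → R) (i : ι) :
    piLocMap S ι x i = algebraMap R S (x i) := rfl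

lemma piLocMap_isLoc (ι : Type*) [Fintype ι] : IsLocalizedModule p (piLocMap S ι) := by
  constructor
  · intro s
    rw [Module.End.isUnit_iff]
    have hu : IsUnit (algebraMap R S (s : R)) := IsLocalization.map_units S s
    constructor
    · intro x y h
      funext i
      have h1 := congrFun h i
      simp only [Module.algebraMap_end_apply, Pi.smul_apply] at h1
      have h2 : algebraMap R S (s : R) * x i = algebraMap R S (s : R) * y i := by
        rw [← Algebra.smul_def, ← Algebra.smul_def]
        exact h1
      exact hu.mul_left_cancel h2
    · intro y
      obtain ⟨u, hu'⟩ := hu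
      refine ⟨fun i => (↑u⁻¹ : S) * y i, ?_⟩
      funext i
      simp only [Module.algebraMap_end_apply, Pi.smul_apply, Algebra.smul_def, ← hu',
        ← mul_assoc, Units.mul_inv, one_mul]
  · intro y
    obtain ⟨b, hb⟩ := IsLocalization.exist_integer_multiples p Finset.univ y
    have hx : ∀ i : ι, ∃ r : R, algebraMap R S r = b • y i :=
      fun i => hb i (Finset.mem_univ i)
    choose x hxs using hx
    refine ⟨⟨x, b⟩, ?_⟩
    funext i
    exact (hxs i).symm
  · intro x x' h
    have hc : ∀ i : ι, ∃ c : p, (c : R) * x i = (c : R) * x' i := by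
      intro i
      exact (IsLocalization.eq_iff_exists p S).mp (congrFun h i)
    choose c hcs using hc
    refine ⟨∏ i, c i, ?_⟩
    funext i
    obtain ⟨k, hk⟩ : ((c i : R)) ∣ ∏ j, (c j : R) :=
      Finset.dvd_prod_of_mem (fun j => ((c j : R))) (Finset.mem_univ i)
    have hcoe : ((∏ j, c j : p) : R) = ∏ j, ((c j : R)) := by
      simp
    show ((∏ j, c j : p) : R) * x i = ((∏ j, c j : p) : R) * x' i
    rw [hcoe, hk]
    linear_combination k * hcs i

end PiLoc

section Upgrade
variable {R S P Q : Type*} [CommRing R] [CommRing S] [Algebra R S]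
  (p : Submonoid R) [IsLocalization p S]
  [AddCommMonoid P] [AddCommMonoid Q] [Module R P] [Module R Q]
  [Module S P] [Module S Q] [IsScalarTower R S P] [IsScalarTower R S Q]

lemma upgrade_key (r : R) (t : p) (z : P) :
    (t : R) • (IsLocalization.mk' S r t • z) = r • z := by
  rw [← algebraMap_smul S (t : R), ← algebraMap_smul S r, smul_smul,
    IsLocalization.mk'_spec']

/-- An `R`-linear equivalence between `S`-modules is `S`-linear when `S` is a localization. -/
noncomputable def upgradeEquiv (e : P ≃ₗ[R] Q) : P ≃ₗ[S] Q where
  __ := e.toAddEquiv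
  map_smul' s x := by
    obtain ⟨⟨r, t⟩, rfl⟩ := IsLocalization.mk'_surjective p s
    have hu : IsUnit (algebraMap R S (t : R)) := IsLocalization.map_units S t
    have hcancel : ∀ (a b : Q), (t : R) • a = (t : R) • b → a = b := by
      intro a b hab
      rw [← algebraMap_smul S (t : R) a, ← algebraMap_smul S (t : R) b] at hab
      obtain ⟨u, hu'⟩ := hu
      have := congrArg (fun z => (↑u⁻¹ : S) • z) hab
      simpa [← hu', smul_smul] using this
    apply hcancel
    show (t : R) • e (IsLocalization.mk' S r t • x) = (t : R) • (IsLocalization.mk' S r t • e x)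
    rw [upgrade_key p r t (e x), ← _root_.map_smul e, upgrade_key p r t x, _root_.map_smul]

end Upgrade


section Main
variable {R : Type*} [CommRing R]

theorem main_prime (n m k : ℕ) (Φ : Matrix (Fin n) (Fin m) R)
    (a : R) (ha : a ∈ nonZeroDivisors R)
    (hvanish : ∀ (f : Fin (k + 1) → Fin n) (g : Fin (k + 1) → Fin m),
      Function.Injective f → Function.Injective g → (Φ.submatrix f g).det = 0)
    (hgen : Ideal.span {x : R | ∃ (f : Fin k → Fin n) (g : Fin k → Fin m),
        Function.Injective f ∧ Function.Injective g ∧ (Φ.submatrix f g).det = x} =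
      Ideal.span {a})
    (p : Ideal R) (hp : p.IsPrime) :
    Module.Free (Localization.AtPrime p)
        (LocalizedModule p.primeCompl (LinearMap.range Φ.mulVecLin)) ∧
      Module.finrank (Localization.AtPrime p)
        (LocalizedModule p.primeCompl (LinearMap.range Φ.mulVecLin)) = k := by
  haveI := hp
  set S := Localization.AtPrime p with hS
  haveI hfn : IsLocalizedModule p.primeCompl (piLocMap S (Fin n)) :=
    piLocMap_isLoc S p.primeCompl (Fin n)
  haveI hfm : IsLocalizedModule p.primeCompl (piLocMap S (Fin m)) :=
    piLocMap_isLoc S p.primeCompl (Fin m)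
  set Φp : Matrix (Fin n) (Fin m) S := Φ.map (algebraMap R S) with hΦp
  -- the image of `a` is a non-zero-divisor
  have ha' : algebraMap R S a ∈ nonZeroDivisors S := by
    rw [mem_nonZeroDivisors_iff_right]
    intro x hx
    obtain ⟨⟨r, t⟩, rfl⟩ := IsLocalization.mk'_surjective p.primeCompl x
    have h1 : IsLocalization.mk' S (a * r) t = 0 := by
      rw [← IsLocalization.mul_mk'_eq_mk'_of_mul, mul_comm]
      exact hx
    obtain ⟨c, hc⟩ := (IsLocalization.mk'_eq_zero_iff _ _).mp h1
    have h2 : ((c : R) * r) * a = 0 := by linear_combination hc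
    have h3 : (c : R) * r = 0 := ha.2 _ h2
    rw [IsLocalization.mk'_eq_zero_iff]
    exact ⟨c, h3⟩
  -- the minor hypotheses localize
  have hvanishp : ∀ (f : Fin (k + 1) → Fin n) (g : Fin (k + 1) → Fin m),
      Function.Injective f → Function.Injective g → (Φp.submatrix f g).det = 0 := by
    intro f g hf hg
    have : Φp.submatrix f g = (Φ.submatrix f g).map (algebraMap R S) := by
      rw [hΦp, Matrix.submatrix_map]
    rw [this, ← RingHom.mapMatrix_apply, ← RingHom.map_det, hvanish f g hf hg, map_zero]
  have hgenp : Ideal.span {x : S | ∃ (f : Fin k → Fin n) (g : Fin k → Fin m),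
      Function.Injective f ∧ Function.Injective g ∧ (Φp.submatrix f g).det = x} =
      Ideal.span {algebraMap R S a} := by
    have hsets : {x : S | ∃ (f : Fin k → Fin n) (g : Fin k → Fin m),
        Function.Injective f ∧ Function.Injective g ∧ (Φp.submatrix f g).det = x} =
        algebraMap R S '' {x : R | ∃ (f : Fin k → Fin n) (g : Fin k → Fin m),
        Function.Injective f ∧ Function.Injective g ∧ (Φ.submatrix f g).det = x} := by
      ext x
      constructor
      · rintro ⟨f, g, hf, hg, rfl⟩
        refine ⟨(Φ.submatrix f g).det, ⟨f, g, hf, hg, rfl⟩, ?_⟩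
        rw [RingHom.map_det, RingHom.mapMatrix_apply, hΦp, Matrix.submatrix_map]
      · rintro ⟨y, ⟨f, g, hf, hg, rfl⟩, rfl⟩
        refine ⟨f, g, hf, hg, ?_⟩
        rw [hΦp, Matrix.submatrix_map, ← RingHom.mapMatrix_apply, ← RingHom.map_det]
    rw [hsets, ← Ideal.map_span (algebraMap R S), hgen, Ideal.map_span, Set.image_singleton]
  have hfree := aux_local Φp (algebraMap R S a) ha' hvanishp hgenp
  -- identify the localized module with the range of the localized matrix
  have hmapeq : (IsLocalizedModule.map p.primeCompl (piLocMap S (Fin m)) (piLocMap S (Fin n))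
      Φ.mulVecLin) = (Φp.mulVecLin).restrictScalars R := by
    apply IsLocalizedModule.ext p.primeCompl (piLocMap S (Fin m))
      (IsLocalizedModule.map_units (piLocMap S (Fin n)))
    rw [IsLocalizedModule.map_comp]
    refine LinearMap.ext fun x => funext fun i => ?_
    show algebraMap R S (Φ.mulVec x i) = Φp.mulVec (fun j => algebraMap R S (x j)) i
    simp [Matrix.mulVec, dotProduct, hΦp, Matrix.map_apply, map_sum]
  have hsub : (LinearMap.range Φ.mulVecLin).localized' S p.primeCompl (piLocMap S (Fin n)) =
      LinearMap.range Φp.mulVecLin := by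
    apply Submodule.restrictScalars_injective R
    rw [Submodule.restrictScalars_localized',
      ← LinearMap.range_localizedMap_eq_localized₀_range p.primeCompl (piLocMap S (Fin m))
        (piLocMap S (Fin n)) Φ.mulVecLin, hmapeq]
    ext x
    simp [LinearMap.mem_range]
  have e1 : LocalizedModule p.primeCompl (LinearMap.range Φ.mulVecLin) ≃ₗ[R]
      ((LinearMap.range Φ.mulVecLin).localized' S p.primeCompl (piLocMap S (Fin n))) :=
    IsLocalizedModule.iso p.primeCompl
      ((LinearMap.range Φ.mulVecLin).toLocalized' S p.primeCompl (piLocMap S (Fin n)))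
  have e2 : ((LinearMap.range Φ.mulVecLin).localized' S p.primeCompl (piLocMap S (Fin n)))
      ≃ₗ[S] LinearMap.range Φp.mulVecLin := LinearEquiv.ofEq _ _ hsub
  have e : LocalizedModule p.primeCompl (LinearMap.range Φ.mulVecLin) ≃ₗ[S]
      LinearMap.range Φp.mulVecLin := (upgradeEquiv p.primeCompl e1).trans e2
  constructor
  · haveI := hfree.1
    exact Module.Free.of_equiv e.symm
  · rw [LinearEquiv.finrank_eq e]
    exact hfree.2
end Main


/-- Let `R` be a commutative noetherian ring, `Φ` an `n × m` matrix over `R`, and `r ≤ n`.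
Assume every `(n-r+1) × (n-r+1)` minor of `Φ` vanishes and that the ideal generated by the
`(n-r) × (n-r)` minors of `Φ` is generated by a single non-zero-divisor `a`.  Then the image
of the linear map `R^m → R^n` given by `Φ` is flat, and its localization at every prime `p`
is a free module of rank `n - r` over the localization `R_p`. -/
theorem image_flat_of_fitting_ideal_principal
    (R : Type*) [CommRing R] [IsNoetherianRing R]
    (n m r : ℕ) (hr : r ≤ n)
    (Φ : Matrix (Fin n) (Fin m) R)
    (a : R) (ha : a ∈ nonZeroDivisors R)
    (hvanish : ∀ (f : Fin (n - r + 1) → Fin n) (g : Fin (n - r + 1) → Fin m),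
      Function.Injective f → Function.Injective g → (Φ.submatrix f g).det = 0)
    (hgen : Ideal.span {x : R | ∃ (f : Fin (n - r) → Fin n) (g : Fin (n - r) → Fin m),
        Function.Injective f ∧ Function.Injective g ∧ (Φ.submatrix f g).det = x} =
      Ideal.span {a}) :
    Module.Flat R (LinearMap.range Φ.mulVecLin) ∧
      ∀ (p : Ideal R) (hp : p.IsPrime),
        haveI : p.IsPrime := hp
        Module.Free (Localization.AtPrime p)
          (LocalizedModule p.primeCompl (LinearMap.range Φ.mulVecLin)) ∧
        Module.finrank (Localization.AtPrime p)
          (LocalizedModule p.primeCompl (LinearMap.range Φ.mulVecLin)) = n - r := by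
  have key := fun (p : Ideal R) (hp : p.IsPrime) =>
    main_prime n m (n - r) Φ a ha hvanish hgen p hp
  constructor
  · haveI : Module.Finite R (LinearMap.range Φ.mulVecLin) := Module.Finite.range _
    haveI : Module.FinitePresentation R (LinearMap.range Φ.mulVecLin) :=
      Module.finitePresentation_of_finite R _
    haveI hproj : Module.Projective R (LinearMap.range Φ.mulVecLin) := by
      refine Module.projective_of_localization_maximal (fun I hI => ?_)
      haveI : Module.Free (Localization.AtPrime I)
          (LocalizedModule I.primeCompl (LinearMap.range Φ.mulVecLin)) := (key I hI.isPrime).1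
      exact Module.Projective.of_free
    infer_instance
  · exact key
end

section
/- Let R be a commutative noetherian ring, let Φ be an n × m matrix over R, and let r ≥ 0 be a natural number. Then every (n−r) × (n−r) minor of Φ is nilpotent in R if and only if, for every minimal prime ideal p of R, the cokernel of the κ(p)-linear map κ(p)ᵐ → κ(p)ⁿ induced by Φ (where κ(p) denotes the fraction field of R/p) has dimension at least r + 1 over κ(p). -/
open Module Submodule Matrix

/-- From a finite family whose span has dimension at least `k`, one can extract `k`
linearly independent members with distinct indices. -/
private lemma aux_exists_inj {K V : Type*} [Field K] [AddCommGroup V] [Module K V]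
    {ι : Type*} [Fintype ι] (v : ι → V) {k : ℕ}
    (hk : k ≤ Module.finrank K (Submodule.span K (Set.range v))) :
    ∃ g : Fin k → ι, Function.Injective g ∧ LinearIndependent K (v ∘ g) := by
  obtain ⟨b, hb_sub, hspan, hli⟩ := exists_linearIndependent K (Set.range v)
  have hbfin : b.Finite := (Set.finite_range v).subset hb_sub
  haveI : Fintype b := hbfin.fintype
  have hcard : Module.finrank K (Submodule.span K (Set.range v)) = Fintype.card b := by
    rw [← hspan]
    have := finrank_span_eq_card (R := K) (b := ((↑) : b → V)) hli
    rwa [Subtype.range_coe] at this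
  rw [hcard] at hk
  have : Nonempty (Fin k ↪ b) := by
    apply Function.Embedding.nonempty_of_card_le
    simpa using hk
  obtain ⟨e⟩ := this
  have hchoice : ∀ i : Fin k, ∃ j : ι, v j = (e i : V) := fun i => hb_sub (e i).2
  choose g hg using hchoice
  have hvg : v ∘ g = fun i => ((e i : b) : V) := funext fun i => hg i
  refine ⟨g, ?_, ?_⟩
  · intro a b' hab
    have : v (g a) = v (g b') := by rw [hab]
    rw [hg a, hg b'] at this
    exact e.injective (Subtype.ext this)
  · rw [hvg]
    exact hli.comp e e.injective

/-- Over a field, the rank of a matrix is at least `k` iff it has a `k × k` submatrix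
with nonzero determinant. -/
private lemma aux_rank_le_iff {K : Type*} [Field K] {n m k : ℕ}
    (A : Matrix (Fin n) (Fin m) K) :
    k ≤ A.rank ↔ ∃ (f : Fin k → Fin n) (g : Fin k → Fin m),
      Function.Injective f ∧ Function.Injective g ∧ (A.submatrix f g).det ≠ 0 := by
  constructor
  · intro hk
    rw [Matrix.rank_eq_finrank_span_cols] at hk
    obtain ⟨g, hginj, hgli⟩ := aux_exists_inj Aᵀ hk
    set B := A.submatrix (id : Fin n → Fin n) g with hB
    have hBT : Bᵀ = Aᵀ ∘ g := by
      ext j i; rfl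
    have hrankBT : Bᵀ.rank = k := by
      have : LinearIndependent K (fun j => Bᵀ j) := by rw [hBT]; exact hgli
      exact this.rank_matrix.trans (Fintype.card_fin k)
    have hrankB : B.rank = k := by
      rw [← Matrix.rank_transpose, hrankBT]
    have hk' : k ≤ Module.finrank K (Submodule.span K (Set.range B)) := by
      show k ≤ Module.finrank K (Submodule.span K (Set.range B.row))
      rw [← Matrix.rank_eq_finrank_span_row, hrankB]
    obtain ⟨f, hfinj, hfli⟩ := aux_exists_inj B hk'
    have hCf : (fun i => (B.submatrix f id) i) = B ∘ f := by
      ext i j; rfl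
    have hunit : IsUnit (B.submatrix f id) := by
      rw [← Matrix.linearIndependent_rows_iff_isUnit]
      exact hfli
    refine ⟨f, g, hfinj, hginj, ?_⟩
    have := (Matrix.isUnit_iff_isUnit_det _).mp hunit
    exact this.ne_zero
  · rintro ⟨f, g, hf, hg, hdet⟩
    have hunit : IsUnit (A.submatrix f g) :=
      (Matrix.isUnit_iff_isUnit_det _).mpr (isUnit_iff_ne_zero.mpr hdet)
    have h1 : (A.submatrix f g).rank = k := by
      rw [Matrix.rank_of_isUnit _ hunit, Fintype.card_fin]
    -- rank (A.submatrix f g) ≤ rank (A.submatrix id g) via rows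
    have h2 : (A.submatrix f g).rank ≤ (A.submatrix id g).rank := by
      rw [Matrix.rank_eq_finrank_span_row, Matrix.rank_eq_finrank_span_row]
      apply Submodule.finrank_mono
      apply Submodule.span_mono
      rintro x ⟨i, rfl⟩
      exact ⟨f i, rfl⟩
    -- rank (A.submatrix id g) ≤ rank A via columns
    have h3 : (A.submatrix id g).rank ≤ A.rank := by
      rw [Matrix.rank_eq_finrank_span_cols, Matrix.rank_eq_finrank_span_cols]
      apply Submodule.finrank_mono
      apply Submodule.span_mono
      rintro x ⟨j, rfl⟩
      exact ⟨g j, rfl⟩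
    omega

private lemma aux_nilpotent_iff {R : Type*} [CommRing R] (x : R) :
    IsNilpotent x ↔ ∀ p ∈ minimalPrimes R, x ∈ p := by
  rw [nilpotent_iff_mem_prime]
  constructor
  · intro h p hp
    exact h p hp.1.1
  · intro h J hJ
    obtain ⟨p, hp, hple⟩ := Ideal.exists_minimalPrimes_le (I := ⊥) (J := J) bot_le
    exact hple (h p hp)

/-- Let `R` be a commutative noetherian ring, `Φ` an `n × m` matrix over `R`, and `r ≥ 0`.
Then every `(n-r) × (n-r)` minor of `Φ` is nilpotent if and only if, for every minimal prime
`p` of `R`, the cokernel of the `κ(p)`-linear map `κ(p)^m → κ(p)^n` induced by `Φ` (where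
`κ(p)` is the fraction field of `R ⧸ p`) has dimension at least `r + 1` over `κ(p)`. -/
theorem minors_nilpotent_iff_generic_corank
    (R : Type*) [CommRing R] [IsNoetherianRing R]
    (n m r : ℕ) (Φ : Matrix (Fin n) (Fin m) R) :
    (∀ (f : Fin (n - r) → Fin n) (g : Fin (n - r) → Fin m),
      Function.Injective f → Function.Injective g → IsNilpotent (Φ.submatrix f g).det) ↔
    (∀ (p : Ideal R) (hp : p ∈ minimalPrimes R),
      haveI : p.IsPrime := hp.1.1
      r + 1 ≤ Module.finrank (FractionRing (R ⧸ p))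
        ((Fin n → FractionRing (R ⧸ p)) ⧸ LinearMap.range
          (Φ.map ((algebraMap (R ⧸ p) (FractionRing (R ⧸ p))).comp
            (Ideal.Quotient.mk p))).mulVecLin)) := by
  -- per-prime equivalence
  have key : ∀ (p : Ideal R) (hp : p ∈ minimalPrimes R),
      (haveI : p.IsPrime := hp.1.1
      r + 1 ≤ Module.finrank (FractionRing (R ⧸ p))
        ((Fin n → FractionRing (R ⧸ p)) ⧸ LinearMap.range
          (Φ.map ((algebraMap (R ⧸ p) (FractionRing (R ⧸ p))).comp
            (Ideal.Quotient.mk p))).mulVecLin)) ↔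
      (∀ (f : Fin (n - r) → Fin n) (g : Fin (n - r) → Fin m),
        Function.Injective f → Function.Injective g → (Φ.submatrix f g).det ∈ p) := by
    intro p hp
    haveI : p.IsPrime := hp.1.1
    set K := FractionRing (R ⧸ p)
    set φ : R →+* K := (algebraMap (R ⧸ p) K).comp (Ideal.Quotient.mk p) with hφ
    set N : Matrix (Fin n) (Fin m) K := Φ.map φ with hN
    have hker : ∀ x : R, φ x = 0 ↔ x ∈ p := by
      intro x
      rw [hφ, RingHom.comp_apply]
      constructor
      · intro h
        have : Ideal.Quotient.mk p x = 0 :=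
          IsFractionRing.injective (R ⧸ p) K (by simpa using h)
        exact (Ideal.Quotient.eq_zero_iff_mem).mp this
      · intro h
        rw [(Ideal.Quotient.eq_zero_iff_mem).mpr h, map_zero]
    -- corank in terms of rank
    have hq : Module.finrank K ((Fin n → K) ⧸ LinearMap.range N.mulVecLin)
        = n - N.rank := by
      have h1 := Submodule.finrank_quotient_add_finrank (LinearMap.range N.mulVecLin)
      have h2 : Module.finrank K (Fin n → K) = n := Module.finrank_fin_fun K
      have h3 : Module.finrank K (LinearMap.range N.mulVecLin) = N.rank := rfl
      omega
    have hrle : N.rank ≤ n := Matrix.rank_le_height N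
    rw [hq]
    have hiff : (r + 1 ≤ n - N.rank) ↔ ¬ (n - r ≤ N.rank) := by omega
    rw [hiff, aux_rank_le_iff N]
    push_neg
    constructor
    · intro h f g hf hg
      have h0 := h f g hf hg
      rw [hN, Matrix.submatrix_map, ← RingHom.mapMatrix_apply, ← RingHom.map_det, hker] at h0
      exact h0
    · intro h f g hf hg
      rw [hN, Matrix.submatrix_map, ← RingHom.mapMatrix_apply, ← RingHom.map_det, hker]
      exact h f g hf hg
  constructor
  · intro h p hp
    rw [key p hp]
    intro f g hf hg
    exact (aux_nilpotent_iff _).mp (h f g hf hg) p hp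
  · intro h f g hf hg
    rw [aux_nilpotent_iff]
    intro p hp
    exact (key p hp).mp (h p hp) f g hf hg
end

section
/- Let A be a commutative Banach ℚ_p-algebra whose norm is nonarchimedean (ultrametric), and let f ∈ A be an element such that f − 1 is topologically nilpotent, i.e. (f − 1)ⁿ → 0 as n → ∞. Then there exists a unique continuous map χ : ℤ_p → A such that χ(1) = f and χ(x + y) = χ(x)·χ(y) for all x, y ∈ ℤ_p. Moreover, χ(x) is a unit of A for every x ∈ ℤ_p (in particular χ(0) = 1 and f is a unit). -/
open Filter

namespace CharAuxPrivate

variable {p : ℕ} [hp : Fact p.Prime] {A : Type*} [NormedCommRing A] [NormedAlgebra ℚ_[p] A]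

lemma norm_natCast_le_one (m : ℕ) : ‖(m : ℚ_[p])‖ ≤ 1 := by
  have := Padic.norm_int_le_one (p := p) (m : ℤ)
  push_cast at this
  exact this

lemma norm_sum_le_of_forall (hna : ∀ x y : A, ‖x + y‖ ≤ max ‖x‖ ‖y‖)
    {ι : Type*} (s : Finset ι) (a : ι → A) {M : ℝ} (hM : 0 ≤ M)
    (h : ∀ i ∈ s, ‖a i‖ ≤ M) : ‖∑ i ∈ s, a i‖ ≤ M := by
  classical
  induction s using Finset.induction_on with
  | empty => simpa using hM
  | @insert j s hj ih =>
    rw [Finset.sum_insert hj]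
    exact (hna _ _).trans (max_le (h _ (Finset.mem_insert_self _ _))
      (ih fun i hi => h i (Finset.mem_insert_of_mem hi)))

lemma pow_eq_sum (f : A) (n : ℕ) :
    f ^ n = ∑ k ∈ Finset.range (n + 1), ((n.choose k : ℚ_[p])) • (f - 1) ^ k := by
  conv_lhs => rw [show f = (f - 1) + 1 by ring]
  rw [add_pow]
  refine Finset.sum_congr rfl fun k _ => ?_
  rw [one_pow, mul_one, Algebra.smul_def (R := ℚ_[p]), map_natCast, mul_comm]

/-- If each relevant binomial term is small, `u ^ n` is close to `1`. -/
lemma norm_pow_sub_one_le (hna : ∀ x y : A, ‖x + y‖ ≤ max ‖x‖ ‖y‖)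
    (u : A) (n : ℕ) {ε : ℝ} (hε : 0 ≤ ε)
    (h : ∀ k, 1 ≤ k → k ≤ n → ‖((n.choose k : ℕ) : ℚ_[p])‖ * ‖(u - 1) ^ k‖ ≤ ε) :
    ‖u ^ n - 1‖ ≤ ε := by
  have hrepr : u ^ n - 1 = ∑ k ∈ Finset.Ico 1 (n + 1), ((n.choose k : ℚ_[p])) • (u - 1) ^ k := by
    rw [pow_eq_sum (p := p), Finset.range_eq_Ico,
      Finset.sum_eq_sum_Ico_succ_bot (Nat.succ_pos n)]
    rw [pow_zero, Nat.choose_zero_right, Nat.cast_one, one_smul, add_sub_cancel_left]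
  rw [hrepr]
  refine norm_sum_le_of_forall hna _ _ hε fun k hk => ?_
  rw [Finset.mem_Ico] at hk
  rw [norm_smul]
  exact h k hk.1 (by omega)

lemma exists_bound (p : ℕ) [hp : Fact p.Prime] {A : Type*} [NormedCommRing A]
    [NormedAlgebra ℚ_[p] A] (hna : ∀ x y : A, ‖x + y‖ ≤ max ‖x‖ ‖y‖) (f : A)
    (hf : Tendsto (fun k : ℕ => (f - 1) ^ k) atTop (nhds 0)) :
    ∃ M : ℝ, 1 ≤ M ∧ (∀ k, ‖(f - 1) ^ k‖ ≤ M) ∧ ∀ n, ‖f ^ n‖ ≤ M := by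
  have hb : BddAbove (Set.range fun k : ℕ => ‖(f - 1) ^ k‖) := by
    have := hf.norm
    rw [norm_zero] at this
    exact this.bddAbove_range
  obtain ⟨C, hC⟩ := hb
  refine ⟨max C 1, le_max_right _ _, fun k => le_trans (hC ⟨k, rfl⟩) (le_max_left _ _), fun n => ?_⟩
  rw [pow_eq_sum (p := p)]
  refine norm_sum_le_of_forall hna _ _ (by positivity) fun k hk => ?_
  rw [norm_smul]
  calc ‖((n.choose k : ℕ) : ℚ_[p])‖ * ‖(f - 1) ^ k‖
      ≤ 1 * max C 1 := by
        refine mul_le_mul (norm_natCast_le_one _)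
          (le_trans (hC ⟨k, rfl⟩) (le_max_left _ _)) (norm_nonneg _) zero_le_one
    _ = max C 1 := one_mul _

lemma norm_choose_le (N k : ℕ) (hk : 1 ≤ k) :
    ‖(((p ^ N).choose k : ℕ) : ℚ_[p])‖ ≤ (p : ℝ) ^ (-(N : ℤ)) / ‖(k : ℚ_[p])‖ := by
  have hppos := hp.out.pos
  have hp1 : 1 ≤ p ^ N := Nat.one_le_pow _ _ hppos
  have key : p ^ N * (p ^ N - 1).choose (k - 1) = (p ^ N).choose k * k := by
    have h := Nat.add_one_mul_choose_eq (p ^ N - 1) (k - 1)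
    have e1 : p ^ N - 1 + 1 = p ^ N := by omega
    have e2 : k - 1 + 1 = k := by omega
    rwa [e1, e2] at h
  have keyQ : ((p : ℚ_[p]) ^ N) * ((p ^ N - 1).choose (k - 1) : ℚ_[p])
      = (((p ^ N).choose k : ℕ) : ℚ_[p]) * (k : ℚ_[p]) := by
    exact_mod_cast congrArg (fun m : ℕ => (m : ℚ_[p])) key
  have hk0 : (0 : ℝ) < ‖(k : ℚ_[p])‖ := by
    rw [norm_pos_iff]
    exact_mod_cast (by omega : k ≠ 0)
  rw [le_div_iff₀ hk0, ← norm_mul, ← keyQ, norm_mul, Padic.norm_p_pow]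
  calc (p : ℝ) ^ (-(N : ℤ)) * ‖((p ^ N - 1).choose (k - 1) : ℚ_[p])‖
      ≤ (p : ℝ) ^ (-(N : ℤ)) * 1 := by
        refine mul_le_mul_of_nonneg_left (norm_natCast_le_one _) ?_
        positivity
    _ = (p : ℝ) ^ (-(N : ℤ)) := mul_one _

lemma small0 (hna : ∀ x y : A, ‖x + y‖ ≤ max ‖x‖ ‖y‖) (f : A)
    (hf : Tendsto (fun k : ℕ => (f - 1) ^ k) atTop (nhds 0)) :
    ∀ ε : ℝ, 0 < ε → ∃ N : ℕ, ‖f ^ (p ^ N) - 1‖ ≤ ε := by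
  intro ε hε
  obtain ⟨K, hK⟩ := Metric.tendsto_atTop.mp hf ε hε
  have hkey : ∀ᶠ N in (atTop : Filter ℕ), ∀ k ∈ Finset.Ico 1 K,
      ‖(((p ^ N).choose k : ℕ) : ℚ_[p])‖ * ‖(f - 1) ^ k‖ ≤ ε := by
    rw [Filter.eventually_all_finset]
    intro k hk
    rw [Finset.mem_Ico] at hk
    have hk0 : (0 : ℝ) < ‖(k : ℚ_[p])‖ := by
      rw [norm_pos_iff]
      exact_mod_cast (by omega : k ≠ 0)
    have hp1 : 1 < (p : ℝ) := by exact_mod_cast hp.out.one_lt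
    have hlim : Tendsto (fun N : ℕ => (p : ℝ) ^ (-(N : ℤ)) / ‖(k : ℚ_[p])‖ * ‖(f - 1) ^ k‖)
        atTop (nhds 0) := by
      have h1 : Tendsto (fun N : ℕ => ((p : ℝ)⁻¹) ^ N) atTop (nhds 0) :=
        tendsto_pow_atTop_nhds_zero_of_lt_one (by positivity)
          (inv_lt_one_of_one_lt₀ hp1)
      have h2 : (fun N : ℕ => (p : ℝ) ^ (-(N : ℤ)) / ‖(k : ℚ_[p])‖ * ‖(f - 1) ^ k‖)
          = fun N : ℕ => ((p : ℝ)⁻¹) ^ N * (‖(f - 1) ^ k‖ / ‖(k : ℚ_[p])‖) := by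
        funext N
        rw [zpow_neg, zpow_natCast, ← inv_pow]
        ring
      rw [h2]
      simpa using h1.mul_const (‖(f - 1) ^ k‖ / ‖(k : ℚ_[p])‖)
    have hev := hlim.eventually_le_const hε
    filter_upwards [hev] with N hN
    calc ‖(((p ^ N).choose k : ℕ) : ℚ_[p])‖ * ‖(f - 1) ^ k‖
        ≤ (p : ℝ) ^ (-(N : ℤ)) / ‖(k : ℚ_[p])‖ * ‖(f - 1) ^ k‖ :=
          mul_le_mul_of_nonneg_right (norm_choose_le N k hk.1) (norm_nonneg _)
      _ ≤ ε := hN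
  obtain ⟨N, hN⟩ := hkey.exists
  refine ⟨N, norm_pow_sub_one_le (p := p) hna f (p ^ N) hε.le fun k hk1 _ => ?_⟩
  by_cases hkK : k < K
  · exact hN k (Finset.mem_Ico.mpr ⟨hk1, hkK⟩)
  · have h1 : ‖(f - 1) ^ k‖ ≤ ε := by
      have := hK k (by omega)
      rw [dist_eq_norm, sub_zero] at this
      exact this.le
    calc ‖(((p ^ N).choose k : ℕ) : ℚ_[p])‖ * ‖(f - 1) ^ k‖
        ≤ 1 * ε := mul_le_mul (norm_natCast_le_one _) h1 (norm_nonneg _) zero_le_one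
      _ = ε := one_mul _

lemma small1 (hna : ∀ x y : A, ‖x + y‖ ≤ max ‖x‖ ‖y‖) (f : A)
    (hf : Tendsto (fun k : ℕ => (f - 1) ^ k) atTop (nhds 0)) :
    ∀ ε : ℝ, 0 < ε → ∃ N : ℕ, ∀ t : ℕ, ‖f ^ (p ^ N * t) - 1‖ ≤ ε := by
  intro ε hε
  obtain ⟨N, hN⟩ := small0 (p := p) hna f hf (min ε 1) (by positivity)
  refine ⟨N, fun t => ?_⟩
  have hbase : f ^ (p ^ N * t) = (f ^ (p ^ N)) ^ t := by rw [pow_mul]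
  rw [hbase]
  refine norm_pow_sub_one_le (p := p) hna _ t hε.le fun k hk1 _ => ?_
  have hsmall : ‖f ^ (p ^ N) - 1‖ ≤ min ε 1 := hN
  calc ‖((t.choose k : ℕ) : ℚ_[p])‖ * ‖(f ^ (p ^ N) - 1) ^ k‖
      ≤ 1 * ‖(f ^ (p ^ N) - 1) ^ k‖ :=
        mul_le_mul_of_nonneg_right (norm_natCast_le_one _) (norm_nonneg _)
    _ = ‖(f ^ (p ^ N) - 1) ^ k‖ := one_mul _
    _ ≤ ‖f ^ (p ^ N) - 1‖ ^ k := norm_pow_le' _ (by omega)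
    _ ≤ ‖f ^ (p ^ N) - 1‖ :=
        pow_le_of_le_one (norm_nonneg _) (hsmall.trans (min_le_right _ _)) (by omega)
    _ ≤ ε := hsmall.trans (min_le_left _ _)

/-- Uniform continuity of `n ↦ f ^ n` with respect to the `p`-adic metric on `ℕ`. -/
lemma uniform (hna : ∀ x y : A, ‖x + y‖ ≤ max ‖x‖ ‖y‖) (f : A)
    (hf : Tendsto (fun k : ℕ => (f - 1) ^ k) atTop (nhds 0)) :
    ∀ ε : ℝ, 0 < ε → ∃ N : ℕ, ∀ n m : ℕ,
      ‖((n : ℤ_[p]) - (m : ℤ_[p]))‖ ≤ (p : ℝ) ^ (-(N : ℤ)) → ‖f ^ n - f ^ m‖ ≤ ε := by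
  intro ε hε
  obtain ⟨M, hM1, _, hMf⟩ := exists_bound p hna f hf
  have hM0 : (0 : ℝ) < M := lt_of_lt_of_le zero_lt_one hM1
  obtain ⟨N, hN⟩ := small1 (p := p) hna f hf (ε / M) (by positivity)
  refine ⟨N, fun n m hnm => ?_⟩
  rcases le_total m n with h | h
  swap
  · rw [norm_sub_rev] at hnm ⊢
    revert hnm
    -- symmetric case: reduce to m ≤ n case below by swapping; we inline the argument
    intro hnm
    obtain ⟨t, ht⟩ : ∃ t : ℕ, m = n + p ^ N * t := by
      have hdvd : ((p : ℤ) ^ N ∣ ((m : ℤ) - (n : ℤ))) := by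
        rw [← PadicInt.norm_int_le_pow_iff_dvd]
        push_cast
        exact hnm
      have hdvd2 : p ^ N ∣ m - n := by
        have : ((p ^ N : ℕ) : ℤ) ∣ ((m - n : ℕ) : ℤ) := by
          push_cast [Nat.cast_sub h]
          exact hdvd
        exact_mod_cast this
      obtain ⟨t, ht⟩ := hdvd2
      exact ⟨t, by omega⟩
    have hrepr : f ^ m - f ^ n = f ^ n * (f ^ (p ^ N * t) - 1) := by
      rw [ht, pow_add]; ring
    rw [hrepr]
    calc ‖f ^ n * (f ^ (p ^ N * t) - 1)‖ ≤ ‖f ^ n‖ * ‖f ^ (p ^ N * t) - 1‖ := norm_mul_le _ _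
      _ ≤ M * (ε / M) := mul_le_mul (hMf _) (hN t) (norm_nonneg _) hM0.le
      _ = ε := by field_simp
  · obtain ⟨t, ht⟩ : ∃ t : ℕ, n = m + p ^ N * t := by
      have hdvd : ((p : ℤ) ^ N ∣ ((n : ℤ) - (m : ℤ))) := by
        rw [← PadicInt.norm_int_le_pow_iff_dvd]
        push_cast
        exact hnm
      have hdvd2 : p ^ N ∣ n - m := by
        have : ((p ^ N : ℕ) : ℤ) ∣ ((n - m : ℕ) : ℤ) := by
          push_cast [Nat.cast_sub h]
          exact hdvd
        exact_mod_cast this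
      obtain ⟨t, ht⟩ := hdvd2
      exact ⟨t, by omega⟩
    have hrepr : f ^ n - f ^ m = f ^ m * (f ^ (p ^ N * t) - 1) := by
      rw [ht, pow_add]; ring
    rw [hrepr]
    calc ‖f ^ m * (f ^ (p ^ N * t) - 1)‖ ≤ ‖f ^ m‖ * ‖f ^ (p ^ N * t) - 1‖ := norm_mul_le _ _
      _ ≤ M * (ε / M) := mul_le_mul (hMf _) (hN t) (norm_nonneg _) hM0.le
      _ = ε := by field_simp

end CharAuxPrivate

open CharAuxPrivate in
/-- Let `A` be a commutative Banach `ℚ_p`-algebra with nonarchimedean norm and let `f ∈ A` be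
such that `f - 1` is topologically nilpotent.  Then there exists a unique continuous map
`χ : ℤ_p → A` with `χ 1 = f` and `χ (x + y) = χ x * χ y` for all `x, y ∈ ℤ_p`; moreover,
`χ x` is a unit of `A` for every `x ∈ ℤ_p`. -/
theorem exists_unique_continuous_character_of_topNilpotent
    (p : ℕ) [Fact p.Prime]
    (A : Type*) [NormedCommRing A] [NormedAlgebra ℚ_[p] A] [CompleteSpace A]
    (hna : ∀ x y : A, ‖x + y‖ ≤ max ‖x‖ ‖y‖)
    (f : A)
    (hf : Filter.Tendsto (fun k : ℕ => (f - 1) ^ k) Filter.atTop (nhds 0)) :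
    (∃! χ : ℤ_[p] → A, Continuous χ ∧ χ 1 = f ∧
        ∀ x y : ℤ_[p], χ (x + y) = χ x * χ y) ∧
      ∀ χ : ℤ_[p] → A, (Continuous χ ∧ χ 1 = f ∧
          ∀ x y : ℤ_[p], χ (x + y) = χ x * χ y) →
        ∀ x : ℤ_[p], IsUnit (χ x) := by
  have hp1 : 1 < (p : ℝ) := by exact_mod_cast (Fact.out : p.Prime).one_lt
  have hp0 : (0 : ℝ) < p := lt_trans zero_lt_one hp1
  -- the approximations
  have happr : ∀ (x : ℤ_[p]) (k : ℕ), ‖x - (PadicInt.appr x k : ℤ_[p])‖ ≤ (p : ℝ) ^ (-(k : ℤ)) :=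
    fun x k => (PadicInt.norm_le_pow_iff_mem_span_pow _ k).mpr (PadicInt.appr_spec k x)
  have hptend : Tendsto (fun k : ℕ => (p : ℝ) ^ (-(k : ℤ))) atTop (nhds 0) := by
    have h1 : Tendsto (fun k : ℕ => ((p : ℝ)⁻¹) ^ k) atTop (nhds 0) :=
      tendsto_pow_atTop_nhds_zero_of_lt_one (by positivity) (inv_lt_one_of_one_lt₀ hp1)
    convert h1 using 2 with k
    rw [zpow_neg, zpow_natCast, inv_pow]
  have hmono : ∀ {N k : ℕ}, N ≤ k → (p : ℝ) ^ (-(k : ℤ)) ≤ (p : ℝ) ^ (-(N : ℤ)) :=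
    fun {N k} h => zpow_le_zpow_right₀ hp1.le (neg_le_neg (by exact_mod_cast h))
  have happr_t : ∀ x : ℤ_[p],
      Tendsto (fun k => ((PadicInt.appr x k : ℤ_[p]))) atTop (nhds x) := by
    intro x
    rw [tendsto_iff_dist_tendsto_zero]
    refine squeeze_zero (fun k => dist_nonneg) (fun k => ?_) hptend
    rw [dist_eq_norm, norm_sub_rev]
    exact happr x k
  have tri : ∀ a b c : ℤ_[p], ‖a - c‖ ≤ max ‖a - b‖ ‖b - c‖ := by
    intro a b c
    calc ‖a - c‖ = ‖(a - b) + (b - c)‖ := by rw [sub_add_sub_cancel]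
      _ ≤ _ := PadicInt.nonarchimedean _ _
  -- Cauchy sequences
  have hcauchy : ∀ x : ℤ_[p], CauchySeq (fun k => f ^ (PadicInt.appr x k)) := by
    intro x
    rw [Metric.cauchySeq_iff']
    intro ε hε
    obtain ⟨N, hN⟩ := uniform (p := p) hna f hf (ε / 2) (by positivity)
    refine ⟨N, fun n hn => ?_⟩
    have hdiff : ‖((PadicInt.appr x n : ℤ_[p])) - (PadicInt.appr x N : ℤ_[p])‖
        ≤ (p : ℝ) ^ (-(N : ℤ)) := by
      refine (tri _ x _).trans (max_le ?_ ?_)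
      · rw [norm_sub_rev]
        exact (happr x n).trans (hmono hn)
      · exact happr x N
    rw [dist_eq_norm]
    exact lt_of_le_of_lt (hN _ _ hdiff) (by linarith)
  choose χ hχ using fun x => cauchySeq_tendsto_of_complete (hcauchy x)
  -- key limit lemma
  have key : ∀ (x : ℤ_[p]) (a : ℕ → ℕ),
      Tendsto (fun k => ((a k : ℤ_[p]))) atTop (nhds x) →
      Tendsto (fun k => f ^ (a k)) atTop (nhds (χ x)) := by
    intro x a ha
    rw [Metric.tendsto_atTop]
    intro ε hε
    obtain ⟨N, hN⟩ := uniform (p := p) hna f hf (ε / 2) (by positivity)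
    have h1 : ∀ᶠ k in atTop,
        ‖((a k : ℤ_[p])) - (PadicInt.appr x k : ℤ_[p])‖ ≤ (p : ℝ) ^ (-(N : ℤ)) := by
      have hsub : Tendsto (fun k => ((a k : ℤ_[p])) - (PadicInt.appr x k : ℤ_[p]))
          atTop (nhds 0) := by
        simpa using ha.sub (happr_t x)
      have hnorm := hsub.norm
      rw [norm_zero] at hnorm
      exact (hnorm.eventually_lt_const (by positivity)).mono fun k hk => hk.le
    have h2 : ∀ᶠ k in atTop, dist (f ^ PadicInt.appr x k) (χ x) < ε / 2 := by
      obtain ⟨K, hK⟩ := Metric.tendsto_atTop.mp (hχ x) (ε / 2) (by positivity)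
      exact eventually_atTop.mpr ⟨K, hK⟩
    obtain ⟨K, hK⟩ := eventually_atTop.mp (h1.and h2)
    refine ⟨K, fun k hk => ?_⟩
    obtain ⟨hA, hB⟩ := hK k hk
    calc dist (f ^ a k) (χ x)
        ≤ dist (f ^ a k) (f ^ PadicInt.appr x k) + dist (f ^ PadicInt.appr x k) (χ x) :=
          dist_triangle _ _ _
      _ < ε / 2 + ε / 2 := by
          refine add_lt_add_of_le_of_lt ?_ hB
          rw [dist_eq_norm]
          exact hN _ _ hA
      _ = ε := by ring
  -- properties of χ
  have hone : χ 1 = f := by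
    have h := key 1 (fun _ => 1) (by
      simp only [Nat.cast_one]
      exact (tendsto_const_nhds : Tendsto (fun _ : ℕ => (1 : ℤ_[p])) atTop (nhds 1)))
    simp only [pow_one] at h
    exact tendsto_nhds_unique h tendsto_const_nhds
  have hmul : ∀ x y : ℤ_[p], χ (x + y) = χ x * χ y := by
    intro x y
    have h1 : Tendsto (fun k => f ^ (PadicInt.appr x k + PadicInt.appr y k))
        atTop (nhds (χ (x + y))) := by
      refine key (x + y) _ ?_
      simp only [Nat.cast_add]
      exact (happr_t x).add (happr_t y)
    have h2 : Tendsto (fun k => f ^ (PadicInt.appr x k + PadicInt.appr y k))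
        atTop (nhds (χ x * χ y)) := by
      simpa [pow_add] using (hχ x).mul (hχ y)
    exact tendsto_nhds_unique h1 h2
  have hcont : Continuous χ := by
    rw [Metric.continuous_iff]
    intro x ε hε
    obtain ⟨N, hN⟩ := uniform (p := p) hna f hf (ε / 2) (by positivity)
    refine ⟨(p : ℝ) ^ (-(N : ℤ)), by positivity, fun y hy => ?_⟩
    have hev : ∀ᶠ k in atTop,
        ‖f ^ PadicInt.appr y k - f ^ PadicInt.appr x k‖ ≤ ε / 2 := by
      filter_upwards [eventually_ge_atTop N] with k hk
      refine hN _ _ ?_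
      refine (tri _ y _).trans (max_le ?_ ?_)
      · rw [norm_sub_rev]
        exact (happr y k).trans (hmono hk)
      · refine (tri y x _).trans (max_le ?_ ((happr x k).trans (hmono hk)))
        rw [← dist_eq_norm]
        exact hy.le
    have hlim : Tendsto (fun k => f ^ PadicInt.appr y k - f ^ PadicInt.appr x k)
        atTop (nhds (χ y - χ x)) := (hχ y).sub (hχ x)
    have hle : ‖χ y - χ x‖ ≤ ε / 2 := by
      have := hlim.norm
      exact le_of_tendsto this hev
    rw [dist_eq_norm]
    linarith
  -- values at naturals for arbitrary χ' with the three properties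
  have hnat : ∀ χ' : ℤ_[p] → A, χ' 1 = f → (∀ x y : ℤ_[p], χ' (x + y) = χ' x * χ' y) →
      ∀ n : ℕ, χ' (((n + 1 : ℕ) : ℤ_[p])) = f ^ (n + 1) := by
    intro χ' h1 hm n
    induction n with
    | zero => simpa using h1
    | succ n ih =>
      have hcast : (((n + 1) + 1 : ℕ) : ℤ_[p]) = ((n + 1 : ℕ) : ℤ_[p]) + 1 := by push_cast; ring
      rw [hcast, hm, ih, h1]
      exact (pow_succ f (n + 1)).symm
  have hzero : ∀ χ' : ℤ_[p] → A, Continuous χ' → χ' 1 = f →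
      (∀ x y : ℤ_[p], χ' (x + y) = χ' x * χ' y) → χ' 0 = 1 := by
    intro χ' hc h1 hm
    have hval : ∀ k : ℕ, χ' (((p ^ k : ℕ) : ℤ_[p])) = f ^ (p ^ k) := by
      intro k
      have hpk : (p ^ k - 1) + 1 = p ^ k := by
        have := Nat.one_le_pow k p (Fact.out : p.Prime).pos
        omega
      have h := hnat χ' h1 hm (p ^ k - 1)
      rwa [hpk] at h
    have htend0 : Tendsto (fun k : ℕ => (((p ^ k : ℕ) : ℤ_[p]))) atTop (nhds 0) := by
      rw [tendsto_iff_dist_tendsto_zero]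
      refine squeeze_zero (fun k => dist_nonneg) (fun k => ?_) hptend
      rw [dist_eq_norm, sub_zero]
      push_cast
      rw [PadicInt.norm_p_pow]
    have h2 : Tendsto (fun k : ℕ => χ' (((p ^ k : ℕ) : ℤ_[p]))) atTop (nhds (χ' 0)) :=
      (hc.tendsto 0).comp htend0
    simp only [hval] at h2
    have h3 : Tendsto (fun k : ℕ => f ^ (p ^ k)) atTop (nhds 1) := by
      rw [Metric.tendsto_atTop]
      intro ε hε
      obtain ⟨N, hN⟩ := uniform (p := p) hna f hf (ε / 2) (by positivity)
      refine ⟨N, fun k hk => ?_⟩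
      rw [dist_eq_norm]
      have hnorm : ‖(((p ^ k : ℕ) : ℤ_[p])) - ((0 : ℕ) : ℤ_[p])‖ ≤ (p : ℝ) ^ (-(N : ℤ)) := by
        rw [Nat.cast_zero, sub_zero]
        push_cast
        rw [PadicInt.norm_p_pow]
        exact hmono hk
      have := hN (p ^ k) 0 hnorm
      rw [pow_zero] at this
      exact lt_of_le_of_lt this (by linarith)
    exact tendsto_nhds_unique h2 h3
  have huniq : ∀ χ' : ℤ_[p] → A, (Continuous χ' ∧ χ' 1 = f ∧
      ∀ x y : ℤ_[p], χ' (x + y) = χ' x * χ' y) → χ' = χ := by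
    rintro χ' ⟨hc, h1, hm⟩
    funext x
    have hz := hzero χ' hc h1 hm
    have hnat' : ∀ n : ℕ, χ' ((n : ℤ_[p])) = f ^ n := by
      intro n
      cases n with
      | zero => simpa using hz
      | succ n => exact hnat χ' h1 hm n
    have t1 : Tendsto (fun k => χ' ((PadicInt.appr x k : ℤ_[p]))) atTop (nhds (χ' x)) :=
      (hc.tendsto x).comp (happr_t x)
    simp only [hnat'] at t1
    exact tendsto_nhds_unique t1 (hχ x)
  refine ⟨⟨χ, ⟨hcont, hone, hmul⟩, fun χ' h => huniq χ' ⟨h.1, h.2.1, h.2.2⟩⟩, ?_⟩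
  rintro χ' ⟨hc, h1, hm⟩ x
  have hz := hzero χ' hc h1 hm
  refine IsUnit.of_mul_eq_one (a := χ' x) (χ' (-x)) ?_
  rw [← hm, add_neg_cancel, hz]
end
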